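/- arXiv:1201.4552 — 3 statements merged into one kernel-verified Lean document; each statement's English description precedes it below -/
import Mathlib

section
/- On the percolation event $\mathcal{P}$, the upper growth rate $\mathcal{X} = \limsup_{N\to\infty} \frac{1}{N}\log Z_N$ is $\mathbb{P}_p(\cdot\mid\mathcal{P})$-almost surely constant. -/
open MeasureTheory ProbabilityTheory Filter

noncomputable section

/-- Transversal lattice `ℤ^d`. -/
abbrev Zd (d : ℕ) := Fin d → ℤ

/-- A percolation environment on `ℕ × ℤ^d`: `X n x y` tells whether the oriented
edge from `(n, x)` to `(n+1, y)` is open. -/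
abbrev Env (d : ℕ) := ℕ → Zd d → Zd d → Bool

/-- The edge variable associated to an edge `e = (n, x, y)`. -/
def edgeVal (d : ℕ) (e : ℕ × Zd d × Zd d) (X : Env d) : Bool := X e.1 e.2.1 e.2.2

/-- `pathCount d N X` = number of open oriented paths of length `N` starting at the origin. -/
def pathCount (d N : ℕ) (X : Env d) : ℕ :=
  Nat.card {S : Fin (N + 1) → Zd d //
    S 0 = 0 ∧ ∀ i : Fin N, X i (S i.castSucc) (S i.succ) = true}

/-- `pathCountTo d N x X` = number of open oriented paths from `(0,0)` to `(N,x)`. -/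
def pathCountTo (d N : ℕ) (x : Zd d) (X : Env d) : ℕ :=
  Nat.card {S : Fin (N + 1) → Zd d //
    S 0 = 0 ∧ S (Fin.last N) = x ∧ ∀ i : Fin N, X i (S i.castSucc) (S i.succ) = true}

/-- The renormalized partition function `W_N = p^{-N} Z_N`. -/
def W (d : ℕ) (p : ℝ) (N : ℕ) (X : Env d) : ℝ := (pathCount d N X : ℝ) / p ^ N

/-- The percolation event: existence of an infinite open oriented path from the origin. -/
def percEvent (d : ℕ) : Set (Env d) :=
  {X | ∃ S : ℕ → Zd d, S 0 = 0 ∧ ∀ n, X n (S n) (S (n + 1)) = true}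

/-- The sigma-algebra generated by the edge variables in time layers `0, …, N-1`. -/
def cylFilt (d : ℕ) (N : ℕ) : MeasurableSpace (Env d) :=
  MeasurableSpace.comap (fun X => fun (n : Fin N) (x y : Zd d) => X n x y) inferInstance

/-- The environment law: independent Bernoulli edge variables, the edge `(n,x) → (n+1,y)`
being open with probability `p · f (y - x)`. -/
def bernoulliEnv (d : ℕ) (p : ℝ) (f : Zd d → ℝ) (μ : Measure (Env d)) : Prop :=
  iIndepFun (fun e : ℕ × Zd d × Zd d => edgeVal d e) μ ∧
  ∀ n x y, μ {X | X n x y = true} = ENNReal.ofReal (p * f (y - x))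

/-- `N⁻¹ log Z_N` as an extended real, with value `⊥` when `Z_N = 0`. -/
def growthTerm (d : ℕ) (X : Env d) (N : ℕ) : EReal :=
  if pathCount d N X = 0 then ⊥ else ((Real.log (pathCount d N X) / N : ℝ) : EReal)

/-- The environment shifted in time by `N` and in space by `x`. -/
def shiftEnv (d N : ℕ) (x : Zd d) (X : Env d) : Env d := fun n u v => X (n + N) (u + x) (v + x)

/-- The size-biased (tilted) environment: all edges along the walk path `T` (up to time `N`)
are forced open. -/
def tiltEnv (d N : ℕ) (T : Fin (N + 1) → Zd d) (X : Env d) : Env d := fun n x y =>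
  if h : n < N then
    (if T ⟨n, Nat.lt_succ_of_lt h⟩ = x ∧ T ⟨n + 1, Nat.succ_lt_succ h⟩ = y then true else X n x y)
  else X n x y

/-- The probability that a random walk with step distribution `f` started at `0`
follows the path `T` up to time `N`. -/
def walkWeight (d N : ℕ) (f : Zd d → ℝ) (T : Fin (N + 1) → Zd d) : ℝ :=
  if T 0 = 0 then ∏ i : Fin N, f (T i.succ - T i.castSucc) else 0

/-- `(ℙ_p ⊗ P)(W̃_N ≤ K)`: the probability, under the environment law `μ` and an
independent `f`-walk `T`, that the size-biased renormalized partition function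
`W̃_N = p^{-N} Z̃_N` is at most `K`. -/
def tiltTailProb (d N : ℕ) (f : Zd d → ℝ) (p : ℝ) (μ : Measure (Env d)) (K : ℝ) : ℝ :=
  ∑ᶠ T : Fin (N + 1) → Zd d, walkWeight d N f T *
    (μ {X | (pathCount d N (tiltEnv d N T X) : ℝ) / p ^ N ≤ K}).toReal

/-- Tilted environment for an infinite walk `T`: all edges along `T` are forced open. -/
def tiltEnvFull (d : ℕ) (T : ℕ → Zd d) (X : Env d) : Env d := fun n x y =>
  if T n = x ∧ T (n + 1) = y then true else X n x y

/-- The pinned size-biased partition function `Z̄_N`: number of oriented paths from `(0,0)`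
to `(N, T_N)` which are open for the tilted environment. -/
def barZ (d N : ℕ) (T : ℕ → Zd d) (X : Env d) : ℕ :=
  Nat.card {S : Fin (N + 1) → Zd d // S 0 = 0 ∧ S (Fin.last N) = T N ∧
    ∀ i : Fin N, tiltEnvFull d T X i (S i.castSucc) (S i.succ) = true}

/-- Version of `Z̄_N` for a finite walk path `T` of length `N`. -/
def barZfin (d N : ℕ) (T : Fin (N + 1) → Zd d) (X : Env d) : ℕ :=
  Nat.card {S : Fin (N + 1) → Zd d // S 0 = 0 ∧ S (Fin.last N) = T (Fin.last N) ∧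
    ∀ i : Fin N, tiltEnv d N T X i (S i.castSucc) (S i.succ) = true}

/-- The environment shifted by `N` in time and `v` in space. -/
def envSpaceShift (d N : ℕ) (v : Zd d) (X : Env d) : Env d := fun n x y => X (n + N) (x + v) (y + v)

/-- The walk observed after time `N`, recentered at the origin. -/
def walkShift (d N : ℕ) (T : ℕ → Zd d) : ℕ → Zd d := fun n => T (n + N) - T N

/-- `ν` is the law of the random walk started at `0` with i.i.d. increments of law `f`. -/
def isWalkLaw (d : ℕ) (f : Zd d → ℝ) (ν : Measure (ℕ → Zd d)) : Prop :=
  ∀ (M : ℕ) (T' : Fin (M + 1) → Zd d),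
    ν {T | ∀ i : Fin (M + 1), T (i : ℕ) = T' i} = ENNReal.ofReal (walkWeight d M f T')

/-- Monotone coupling of environments at all parameters via uniform variables. -/
def coupledEnv {Ω : Type*} (d : ℕ) (f : Zd d → ℝ) (U : ℕ → Zd d → Zd d → Ω → ℝ)
    (q : ℝ) (ω : Ω) : Env d := fun n x y => decide (U n x y ω ≤ f (y - x) * q)

/-- `k`-fold discrete convolution `f^{∗k}` (the `k`-step transition probability). -/
def fconv (d : ℕ) (f : Zd d → ℝ) : ℕ → Zd d → ℝ
  | 0 => fun z => if z = 0 then 1 else 0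
  | (k + 1) => fun z => ∑ᶠ y, f y * fconv d f k (z - y)

namespace Stmt3Aux

open scoped ENNReal

open MeasurableSpace

variable {d : ℕ}

abbrev Edge (d : ℕ) := ℕ × Zd d × Zd d

/-- Cylinder event. -/
def cylSet (s : Finset (Edge d)) (b : Edge d → Bool) : Set (Env d) :=
  {X | ∀ e ∈ s, X e.1 e.2.1 e.2.2 = b e}

lemma measurable_eval' {I : Type*} (n : I) (x y : Zd d) :
    Measurable fun X : I → Zd d → Zd d → Bool => X n x y :=
  (measurable_pi_apply _).comp ((measurable_pi_apply _).comp (measurable_pi_apply _))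

lemma measurableSet_eval' {I : Type*} (n : I) (x y : Zd d) (b : Bool) :
    MeasurableSet {X : I → Zd d → Zd d → Bool | X n x y = b} :=
  measurable_eval' n x y (measurableSet_singleton b)

lemma measurable_into_pi3 {I : Type*} {m' : MeasurableSpace (Env d)}
    {F : Env d → I → Zd d → Zd d → Bool}
    (h : ∀ (i : I) (x y : Zd d) (b : Bool), MeasurableSet[m'] {X : Env d | F X i x y = b}) :
    @Measurable (Env d) (I → Zd d → Zd d → Bool) m' _ F := by
  letI : MeasurableSpace (Env d) := m'
  refine measurable_pi_lambda _ fun i => ?_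
  refine measurable_pi_lambda _ fun x => ?_
  refine measurable_pi_lambda _ fun y => ?_
  refine measurable_to_countable' fun b => ?_
  have : (fun X => F X i x y) ⁻¹' {b} = {X : Env d | F X i x y = b} := by ext; simp
  rw [this]; exact h i x y b

lemma measurableSet_cylSet (s : Finset (Edge d)) (b : Edge d → Bool) :
    MeasurableSet (cylSet s b) := by
  have : cylSet s b = ⋂ e ∈ s, {X : Env d | X e.1 e.2.1 e.2.2 = b e} := by
    ext X; simp [cylSet]
  rw [this]
  exact MeasurableSet.biInter s.countable_toSet fun e _ => measurableSet_eval' e.1 e.2.1 e.2.2 (b e)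

def cylPi (d : ℕ) : Set (Set (Env d)) := {A | ∃ s b, A = cylSet (d := d) s b}

def cylPiLt (d k : ℕ) : Set (Set (Env d)) :=
  {A | ∃ s b, (∀ e ∈ s, e.1 < k) ∧ A = cylSet (d := d) s b}

def cylPiGe (d k : ℕ) : Set (Set (Env d)) :=
  {A | ∃ s b, (∀ e ∈ s, k ≤ e.1) ∧ A = cylSet (d := d) s b}

lemma cylSet_inter_of_nonempty {s t : Finset (Edge d)} {b b' : Edge d → Bool}
    (hne : (cylSet s b ∩ cylSet t b').Nonempty) [DecidablePred (· ∈ s)] :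
    cylSet s b ∩ cylSet t b' = cylSet (s ∪ t) (fun e => if e ∈ s then b e else b' e) := by
  obtain ⟨X₀, hX₀s, hX₀t⟩ := hne
  have hcons : ∀ e ∈ s, e ∈ t → b e = b' e := fun e hes het => by
    rw [← hX₀s e hes, hX₀t e het]
  ext X
  constructor
  · rintro ⟨hs, ht⟩ e he
    rcases Finset.mem_union.1 he with he' | he'
    · simp only [if_pos he']; exact hs e he'
    · by_cases hes : e ∈ s
      · simp only [if_pos hes]; exact hs e hes
      · simp only [if_neg hes]; exact ht e he'
  · intro h
    constructor
    · intro e he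
      have := h e (Finset.mem_union_left _ he); simpa only [if_pos he] using this
    · intro e he
      have := h e (Finset.mem_union_right _ he)
      by_cases hes : e ∈ s
      · simp only [if_pos hes] at this; rw [this]; exact hcons e hes he
      · simpa only [if_neg hes] using this

lemma isPiSystem_cylPi : IsPiSystem (cylPi d) := by
  classical
  rintro A ⟨s, b, rfl⟩ B ⟨t, b', rfl⟩ hne
  exact ⟨s ∪ t, _, cylSet_inter_of_nonempty hne⟩

lemma isPiSystem_cylPiLt (k : ℕ) : IsPiSystem (cylPiLt d k) := by
  classical
  rintro A ⟨s, b, hs, rfl⟩ B ⟨t, b', ht, rfl⟩ hne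
  exact ⟨s ∪ t, _, fun e he => (Finset.mem_union.1 he).elim (hs e) (ht e),
    cylSet_inter_of_nonempty hne⟩

lemma isPiSystem_cylPiGe (k : ℕ) : IsPiSystem (cylPiGe d k) := by
  classical
  rintro A ⟨s, b, hs, rfl⟩ B ⟨t, b', ht, rfl⟩ hne
  exact ⟨s ∪ t, _, fun e he => (Finset.mem_union.1 he).elim (hs e) (ht e),
    cylSet_inter_of_nonempty hne⟩

lemma generateFrom_cylPi :
    (inferInstance : MeasurableSpace (Env d)) = .generateFrom (cylPi d) := by
  refine le_antisymm ?_ (generateFrom_le ?_)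
  · have h : @Measurable (Env d) (Env d) (.generateFrom (cylPi d)) _ id := by
      refine measurable_into_pi3 fun n x y b => ?_
      have : {X : Env d | id X n x y = b} = cylSet {(n, x, y)} (fun _ => b) := by
        ext X; simp [cylSet]
      rw [this]
      exact measurableSet_generateFrom ⟨_, _, rfl⟩
    exact fun A hA => h hA
  · rintro A ⟨s, b, rfl⟩; exact measurableSet_cylSet s b

/-- The truncation map to the first `k` layers. -/
def trunc (d k : ℕ) : Env d → (Fin k → Zd d → Zd d → Bool) := fun X n x y => X n x y

lemma measurable_trunc (k : ℕ) : Measurable (trunc d k) := by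
  rw [measurable_pi_iff]; intro n
  rw [measurable_pi_iff]; intro x
  rw [measurable_pi_iff]; intro y
  exact measurable_eval' (n : ℕ) x y

lemma cylFilt_eq (k : ℕ) : cylFilt d k = .generateFrom (cylPiLt d k) := by
  refine le_antisymm ?_ (generateFrom_le ?_)
  · have h : @Measurable (Env d) (Fin k → Zd d → Zd d → Bool)
        (.generateFrom (cylPiLt d k)) _ (trunc d k) := by
      refine measurable_into_pi3 fun n x y b => ?_
      have : {X : Env d | trunc d k X n x y = b} = cylSet {((n : ℕ), x, y)} (fun _ => b) := by
        ext X; simp [cylSet, trunc]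
      rw [this]
      exact measurableSet_generateFrom ⟨_, _, fun e he => by
        simp only [Finset.mem_singleton] at he; subst he; exact n.isLt, rfl⟩
    exact h.comap_le
  · rintro A ⟨s, b, hs, rfl⟩
    refine measurableSet_comap.2 ⟨⋂ e ∈ s, ⋂ (h : e.1 < k),
      {Y : Fin k → Zd d → Zd d → Bool | Y ⟨e.1, h⟩ e.2.1 e.2.2 = b e}, ?_, ?_⟩
    · exact MeasurableSet.biInter s.countable_toSet fun e _ =>
        MeasurableSet.iInter fun h => measurableSet_eval' _ _ _ _
    · ext X
      simp only [Set.mem_preimage, Set.mem_iInter, cylSet, Set.mem_setOf_eq]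
      constructor
      · intro h e he; exact h e he (hs e he)
      · intro h e he _; exact h e he

/-- Time shift by `k`. -/
def tshift (d k : ℕ) : Env d → Env d := fun X n x y => X (n + k) x y

lemma measurable_tshift (k : ℕ) : Measurable (tshift d k) := by
  rw [measurable_pi_iff]; intro n
  rw [measurable_pi_iff]; intro x
  rw [measurable_pi_iff]; intro y
  exact measurable_eval' (n + k) x y

/-- The σ-algebra of layers `≥ k`. -/
def laterAlg (d k : ℕ) : MeasurableSpace (Env d) := .comap (tshift d k) inferInstance

lemma laterAlg_eq (k : ℕ) : laterAlg d k = .generateFrom (cylPiGe d k) := by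
  refine le_antisymm ?_ (generateFrom_le ?_)
  · have h : @Measurable (Env d) (Env d) (.generateFrom (cylPiGe d k)) _ (tshift d k) := by
      refine measurable_into_pi3 fun n x y b => ?_
      have : {X : Env d | tshift d k X n x y = b} = cylSet {((n + k : ℕ), x, y)} (fun _ => b) := by
        ext X; simp [cylSet, tshift]
      rw [this]
      exact measurableSet_generateFrom ⟨_, _, fun e he => by
        simp only [Finset.mem_singleton] at he; subst he; exact Nat.le_add_left k n, rfl⟩
    exact h.comap_le
  · rintro A ⟨s, b, hs, rfl⟩
    refine measurableSet_comap.2 ⟨⋂ e ∈ s, {Y : Env d | Y (e.1 - k) e.2.1 e.2.2 = b e}, ?_, ?_⟩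
    · exact MeasurableSet.biInter s.countable_toSet fun e _ => measurableSet_eval' _ _ _ _
    · ext X
      simp only [Set.mem_preimage, Set.mem_iInter, cylSet, Set.mem_setOf_eq, tshift]
      constructor
      · intro h e he; have := h e he; rwa [Nat.sub_add_cancel (hs e he)] at this
      · intro h e he; rw [Nat.sub_add_cancel (hs e he)]; exact h e he

lemma cylFilt_le (k : ℕ) : cylFilt d k ≤ (inferInstance : MeasurableSpace (Env d)) :=
  (measurable_trunc k).comap_le

lemma laterAlg_le (k : ℕ) : laterAlg d k ≤ (inferInstance : MeasurableSpace (Env d)) :=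
  (measurable_tshift k).comap_le

lemma cylFilt_mono {k k' : ℕ} (h : k ≤ k') : cylFilt (d := d) k ≤ cylFilt d k' := by
  rw [cylFilt_eq, cylFilt_eq]
  exact generateFrom_mono fun A ⟨s, b, hs, hA⟩ =>
    ⟨s, b, fun e he => lt_of_lt_of_le (hs e he) h, hA⟩

end Stmt3Aux
namespace Stmt3Aux

open scoped ENNReal

open MeasurableSpace

variable {d : ℕ}

section Measure

variable {p : ℝ} {f : Zd d → ℝ} {μ : Measure (Env d)} [IsProbabilityMeasure μ]

lemma measure_cylSet
    (hind : iIndepFun (fun e : Edge d => edgeVal d e) μ)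
    (s : Finset (Edge d)) (b : Edge d → Bool) :
    μ (cylSet s b) = ∏ e ∈ s, μ {X : Env d | X e.1 e.2.1 e.2.2 = b e} := by
  have h := (iIndepFun_iff_measure_inter_preimage_eq_mul.mp hind) s
    (sets := fun e => {b e}) (fun e _ => measurableSet_singleton _)
  have h1 : (⋂ e ∈ s, edgeVal d e ⁻¹' {b e}) = cylSet s b := by
    ext X; simp [cylSet, edgeVal]
  have h2 : ∀ e, edgeVal d e ⁻¹' {b e} = {X : Env d | X e.1 e.2.1 e.2.2 = b e} := by
    intro e; ext X; simp [edgeVal]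
  rw [h1] at h
  rw [h]
  exact Finset.prod_congr rfl fun e _ => by rw [h2]

lemma measure_eval_bool
    (hmarg : ∀ n x y, μ {X : Env d | X n x y = true} = ENNReal.ofReal (p * f (y - x)))
    (e : Edge d) (b : Bool) :
    μ {X : Env d | X e.1 e.2.1 e.2.2 = b}
      = if b then ENNReal.ofReal (p * f (e.2.2 - e.2.1))
        else 1 - ENNReal.ofReal (p * f (e.2.2 - e.2.1)) := by
  cases b with
  | true => simpa using hmarg e.1 e.2.1 e.2.2
  | false =>
    have hc : {X : Env d | X e.1 e.2.1 e.2.2 = false} = {X : Env d | X e.1 e.2.1 e.2.2 = true}ᶜ := by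
      ext X; simp
    rw [hc, prob_compl_eq_one_sub (measurableSet_eval' e.1 e.2.1 e.2.2 true), hmarg]
    simp

/-- Shift of an edge. -/
def shiftEdge (k : ℕ) (v : Zd d) (e : Edge d) : Edge d := (e.1 + k, e.2.1 + v, e.2.2 + v)

lemma shiftEdge_inj (k : ℕ) (v : Zd d) : Function.Injective (shiftEdge (d := d) k v) := by
  rintro ⟨n, x, y⟩ ⟨n', x', y'⟩ h
  simp only [shiftEdge, Prod.mk.injEq] at h
  obtain ⟨h1, h2, h3⟩ := h
  exact Prod.ext (by omega) (Prod.ext (by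
    have := congrArg (· - v) h2; simpa using this) (by
    have := congrArg (· - v) h3; simpa using this))

def unshiftEdge (k : ℕ) (v : Zd d) (e : Edge d) : Edge d := (e.1 - k, e.2.1 - v, e.2.2 - v)

lemma unshift_shift (k : ℕ) (v : Zd d) (e : Edge d) :
    unshiftEdge k v (shiftEdge k v e) = e := by
  simp [unshiftEdge, shiftEdge]

lemma measurable_shiftEnv (k : ℕ) (v : Zd d) : Measurable (shiftEnv d k v) := by
  rw [measurable_pi_iff]; intro n
  rw [measurable_pi_iff]; intro x
  rw [measurable_pi_iff]; intro y
  exact measurable_eval' (n + k) (x + v) (y + v)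

lemma shiftEnv_preimage_cylSet (k : ℕ) (v : Zd d) (s : Finset (Edge d)) (b : Edge d → Bool) :
    shiftEnv d k v ⁻¹' cylSet s b
      = cylSet (s.image (shiftEdge k v)) (fun e => b (unshiftEdge k v e)) := by
  ext X
  simp only [Set.mem_preimage, cylSet, Set.mem_setOf_eq, Finset.mem_image]
  constructor
  · rintro h e ⟨e', he', rfl⟩
    rw [unshift_shift]
    exact h e' he'
  · intro h e he
    have := h (shiftEdge k v e) ⟨e, he, rfl⟩
    rw [unshift_shift] at this
    exact this
  
lemma map_shiftEnv
    (hind : iIndepFun (fun e : Edge d => edgeVal d e) μ)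
    (hmarg : ∀ n x y, μ {X : Env d | X n x y = true} = ENNReal.ofReal (p * f (y - x)))
    (k : ℕ) (v : Zd d) : μ.map (shiftEnv d k v) = μ := by
  haveI : IsProbabilityMeasure (μ.map (shiftEnv d k v)) :=
    Measure.isProbabilityMeasure_map (measurable_shiftEnv k v).aemeasurable
  refine MeasureTheory.ext_of_generate_finite (cylPi d) generateFrom_cylPi isPiSystem_cylPi
    ?_ (by simp)
  rintro A ⟨s, b, rfl⟩
  rw [Measure.map_apply (measurable_shiftEnv k v) (measurableSet_cylSet s b),
    shiftEnv_preimage_cylSet, measure_cylSet hind, measure_cylSet hind,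
    Finset.prod_image (fun e _ e' _ h => shiftEdge_inj k v h)]
  refine Finset.prod_congr rfl fun e _ => ?_
  rw [unshift_shift]
  rw [measure_eval_bool hmarg, measure_eval_bool hmarg]
  have : (shiftEdge k v e).2.2 - (shiftEdge k v e).2.1 = e.2.2 - e.2.1 := by
    simp [shiftEdge]
  rw [this]

lemma indep_filt_later
    (hind : iIndepFun (fun e : Edge d => edgeVal d e) μ)
    (k : ℕ) : Indep (cylFilt d k) (laterAlg d k) μ := by
  classical
  refine IndepSets.indep (cylFilt_le k) (laterAlg_le k) (isPiSystem_cylPiLt k)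
    (isPiSystem_cylPiGe k) (cylFilt_eq k) (laterAlg_eq k) ?_
  rw [IndepSets_iff]
  rintro A B ⟨s, b, hs, rfl⟩ ⟨t, b', ht, rfl⟩
  have hst : ∀ e ∈ t, e ∉ s := fun e het hes => by
    have := hs e hes; have := ht e het; omega
  have hdisj : Disjoint s t := Finset.disjoint_left.2 fun e hes het => hst e het hes
  have hinter : cylSet s b ∩ cylSet t b'
      = cylSet (s ∪ t) (fun e => if e ∈ s then b e else b' e) := by
    ext X
    constructor
    · rintro ⟨h1, h2⟩ e he
      rcases Finset.mem_union.1 he with he' | he'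
      · simp only [if_pos he']; exact h1 e he'
      · simp only [if_neg (hst e he')]; exact h2 e he'
    · intro h
      constructor
      · intro e he
        have := h e (Finset.mem_union_left _ he); simpa only [if_pos he] using this
      · intro e he
        have := h e (Finset.mem_union_right _ he)
        simpa only [if_neg (hst e he)] using this
  rw [hinter, measure_cylSet hind, measure_cylSet hind, measure_cylSet hind,
    Finset.prod_union hdisj]
  congr 1
  · exact Finset.prod_congr rfl fun e he => by simp only [if_pos he]
  · exact Finset.prod_congr rfl fun e he => by simp only [if_neg (hst e he)]

/-- Approximation of measurable sets by events in finitely many layers. -/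
lemma approx_cylFilt (A : Set (Env d)) (hA : MeasurableSet A) :
    ∀ ε : ℝ≥0∞, ε ≠ 0 → ∃ (k : ℕ) (F : Set (Env d)), MeasurableSet[cylFilt d k] F ∧
      μ (A \ F) ≤ ε ∧ μ (F \ A) ≤ ε := by
  revert A
  have main : ∀ ⦃A : Set (Env d)⦄, MeasurableSet A → ∀ ε : ℝ≥0∞, ε ≠ 0 →
      ∃ (k : ℕ) (F : Set (Env d)), MeasurableSet[cylFilt d k] F ∧
        μ (A \ F) ≤ ε ∧ μ (F \ A) ≤ ε := by
    refine MeasurableSpace.induction_on_inter generateFrom_cylPi isPiSystem_cylPi ?_ ?_ ?_ ?_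
    · intro ε hε
      exact ⟨0, ∅, @MeasurableSet.empty _ (cylFilt d 0), by simp, by simp⟩
    · rintro A ⟨s, b, rfl⟩ ε hε
      refine ⟨s.sup (fun e => e.1) + 1, cylSet s b, ?_, by simp, by simp⟩
      rw [cylFilt_eq]
      exact measurableSet_generateFrom ⟨s, b, fun e he =>
        Nat.lt_succ_of_le (Finset.le_sup (f := fun e => e.1) he), rfl⟩
    · intro A hAmeas ih ε hε
      obtain ⟨k, F, hF, h1, h2⟩ := ih ε hε
      refine ⟨k, Fᶜ, hF.compl, ?_, ?_⟩
      · have : Aᶜ \ Fᶜ = F \ A := by ext x; simp [Set.mem_diff]; tauto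
        rwa [this]
      · have : Fᶜ \ Aᶜ = A \ F := by ext x; simp [Set.mem_diff]; tauto
        rwa [this]
    · intro g hdisj hgmeas ih ε hε
      have hsum : (∑' i, μ (g i)) ≠ ∞ := by
        rw [← measure_iUnion hdisj hgmeas]
        exact measure_ne_top μ _
      have htail := ENNReal.tendsto_sum_nat_add (fun i => μ (g i)) hsum
      have hhalf : ε / 2 ≠ 0 := by
        simp [ENNReal.div_eq_zero_iff, hε]
      obtain ⟨m, hm⟩ := (ENNReal.tendsto_atTop_zero.mp htail) (ε / 2)
        (pos_iff_ne_zero.mpr hhalf)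
      have hm' : (∑' i, μ (g (i + m))) ≤ ε / 2 := hm m le_rfl
      set δ : ℝ≥0∞ := ε / 2 / (m + 1) with hδdef
      have hδ : δ ≠ 0 := by
        apply ENNReal.div_ne_zero.mpr
        exact ⟨hhalf, by simp⟩
      choose ks Fs hFs hd1 hd2 using fun i => ih i δ hδ
      set k := (Finset.range m).sup ks with hk
      set F := ⋃ i ∈ Finset.range m, Fs i with hF
      have hFmeas : MeasurableSet[cylFilt d k] F := by
        apply MeasurableSet.biUnion (Finset.range m).countable_toSet
        intro i hi
        exact cylFilt_mono (Finset.le_sup hi) _ (hFs i)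
      have hsumδ : ∀ (t : Finset ℕ), t ⊆ Finset.range m →
          ∀ (h : ℕ → Set (Env d)), (∀ i, μ (h i) ≤ δ) → μ (⋃ i ∈ t, h i) ≤ ε / 2 := by
        intro t hts h hh
        calc μ (⋃ i ∈ t, h i) ≤ ∑ i ∈ t, μ (h i) := measure_biUnion_finset_le t h
        _ ≤ ∑ _i ∈ t, δ := Finset.sum_le_sum fun i _ => hh i
        _ = t.card • δ := by rw [Finset.sum_const]
        _ ≤ (m + 1) • δ := by
            refine nsmul_le_nsmul_left ?_ ?_
            · exact zero_le
            · have := Finset.card_le_card hts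
              simp only [Finset.card_range] at this; omega
        _ = (m + 1 : ℝ≥0∞) * δ := by simp [nsmul_eq_mul]
        _ = ε / 2 := by
            rw [hδdef, ENNReal.mul_div_cancel' (by simp) (by simp)]
      refine ⟨k, F, hFmeas, ?_, ?_⟩
      · have hsub : (⋃ i, g i) \ F ⊆ (⋃ i ∈ Finset.range m, (g i \ Fs i)) ∪ ⋃ i, g (i + m) := by
          rintro x ⟨hx, hxF⟩
          obtain ⟨j, hj⟩ := Set.mem_iUnion.1 hx
          by_cases hjm : j < m
          · left
            refine Set.mem_biUnion (Finset.mem_range.2 hjm) ⟨hj, fun hxf => hxF ?_⟩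
            exact Set.mem_biUnion (Finset.mem_range.2 hjm) hxf
          · right
            exact Set.mem_iUnion.2 ⟨j - m, by rwa [Nat.sub_add_cancel (le_of_not_gt hjm)]⟩
        calc μ ((⋃ i, g i) \ F) ≤ μ ((⋃ i ∈ Finset.range m, (g i \ Fs i)) ∪ ⋃ i, g (i + m)) :=
              measure_mono hsub
        _ ≤ μ (⋃ i ∈ Finset.range m, (g i \ Fs i)) + μ (⋃ i, g (i + m)) := measure_union_le _ _
        _ ≤ ε / 2 + ε / 2 := by
            refine add_le_add (hsumδ _ le_rfl _ fun i => hd1 i) ?_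
            exact le_trans (measure_iUnion_le _) hm'
        _ = ε := ENNReal.add_halves ε
      · have hsub : F \ (⋃ i, g i) ⊆ ⋃ i ∈ Finset.range m, (Fs i \ g i) := by
          rintro x ⟨hx, hxg⟩
          obtain ⟨j, hj⟩ := Set.mem_iUnion.1 hx
          simp only [Set.mem_iUnion] at hj
          obtain ⟨hjm, hxFj⟩ := hj
          exact Set.mem_biUnion hjm ⟨hxFj, fun h => hxg (Set.mem_iUnion.2 ⟨j, h⟩)⟩
        calc μ (F \ ⋃ i, g i) ≤ μ (⋃ i ∈ Finset.range m, (Fs i \ g i)) := measure_mono hsub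
        _ ≤ ε / 2 := hsumδ _ le_rfl _ fun i => hd2 i
        _ ≤ ε := ENNReal.half_le_self
  exact main

end Measure

end Stmt3Aux
namespace Stmt3Aux

variable {d : ℕ}

/-! ### The good event -/

/-- The event that all open edges have increments in the support of `f`. -/
def GoodSet (d : ℕ) (f : Zd d → ℝ) : Set (Env d) :=
  {X | ∀ n x y, X n x y = true → f (y - x) ≠ 0}

lemma measurableSet_GoodSet (f : Zd d → ℝ) : MeasurableSet (GoodSet d f) := by
  have : GoodSet d f
      = ⋂ (e : Edge d), {X : Env d | f (e.2.2 - e.2.1) = 0 → X e.1 e.2.1 e.2.2 = false} := by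
    ext X
    simp only [GoodSet, Set.mem_setOf_eq, Set.mem_iInter]
    constructor
    · rintro h ⟨n, x, y⟩ hf
      cases hxe : X n x y with
      | false => rfl
      | true => exact absurd hf (h n x y hxe)
    · intro h n x y hX hf
      have := h (n, x, y) hf
      rw [hX] at this; exact Bool.noConfusion this
  rw [this]
  refine MeasurableSet.iInter fun e => ?_
  by_cases hf : f (e.2.2 - e.2.1) = 0
  · have : {X : Env d | f (e.2.2 - e.2.1) = 0 → X e.1 e.2.1 e.2.2 = false}
        = {X : Env d | X e.1 e.2.1 e.2.2 = false} := by
      ext X; simp [hf]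
    rw [this]; exact measurableSet_eval' _ _ _ _
  · have : {X : Env d | f (e.2.2 - e.2.1) = 0 → X e.1 e.2.1 e.2.2 = false} = Set.univ := by
      ext X; simp [hf]
    rw [this]; exact MeasurableSet.univ

lemma goodSet_compl_null {p : ℝ} {f : Zd d → ℝ} {μ : Measure (Env d)}
    (hmarg : ∀ n x y, μ {X : Env d | X n x y = true} = ENNReal.ofReal (p * f (y - x))) :
    μ (GoodSet d f)ᶜ = 0 := by
  have hsub : (GoodSet d f)ᶜ ⊆
      ⋃ (e : {e : Edge d // f (e.2.2 - e.2.1) = 0}),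
        {X : Env d | X e.1.1 e.1.2.1 e.1.2.2 = true} := by
    intro X hX
    simp only [GoodSet, Set.mem_compl_iff, Set.mem_setOf_eq] at hX
    push_neg at hX
    obtain ⟨n, x, y, hXe, hf⟩ := hX
    exact Set.mem_iUnion.2 ⟨⟨(n, x, y), hf⟩, hXe⟩
  refine measure_mono_null hsub (measure_iUnion_null fun e => ?_)
  rw [hmarg]
  have := e.2
  simp only [this, mul_zero, ENNReal.ofReal_zero]

/-! ### Path combinatorics -/

lemma path_ext {N : ℕ} {S S' : Fin (N + 1) → Zd d} (h0 : S 0 = S' 0)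
    (h : ∀ i : Fin N, S i.succ - S i.castSucc = S' i.succ - S' i.castSucc) : S = S' := by
  suffices h' : ∀ m (hm : m < N + 1), S ⟨m, hm⟩ = S' ⟨m, hm⟩ by
    funext j
    have := h' j.1 j.2
    simpa using this
  intro m
  induction m with
  | zero =>
    intro hm
    have e0 : (⟨0, hm⟩ : Fin (N + 1)) = 0 := by ext; simp
    rw [e0]; exact h0
  | succ m ih =>
    intro hm
    have hmN : m < N := by omega
    have hm' : m < N + 1 := by omega
    have hi := h ⟨m, hmN⟩
    have e1 : (⟨m, hmN⟩ : Fin N).succ = ⟨m + 1, hm⟩ := rfl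
    have e2 : (⟨m, hmN⟩ : Fin N).castSucc = ⟨m, hm'⟩ := rfl
    rw [e1, e2] at hi
    have := ih hm'
    have : S ⟨m + 1, hm⟩ = S' ⟨m, hm'⟩ + (S' ⟨m + 1, hm⟩ - S' ⟨m, hm'⟩) := by
      rw [← hi, ← this]; abel
    rw [this]; abel

lemma paths_finite {f : Zd d → ℝ} (hfin : (Function.support f).Finite)
    {X : Env d} (hX : X ∈ GoodSet d f) (N : ℕ) :
    Finite {S : Fin (N + 1) → Zd d //
      S 0 = 0 ∧ ∀ i : Fin N, X i (S i.castSucc) (S i.succ) = true} := by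
  haveI : Finite ↥(Function.support f) := hfin
  haveI : Finite (Fin N → ↥(Function.support f)) := Pi.finite
  refine Finite.of_injective (fun Sp => fun i : Fin N =>
    (⟨Sp.1 i.succ - Sp.1 i.castSucc, hX i (Sp.1 i.castSucc) (Sp.1 i.succ) (Sp.2.2 i)⟩ :
      ↥(Function.support f))) ?_
  intro S S' hSS
  apply Subtype.ext
  refine path_ext (by rw [S.2.1, S'.2.1]) fun i => ?_
  exact congrArg Subtype.val (congrFun hSS i)

lemma pathCount_ne_zero_of_path {f : Zd d → ℝ} (hfin : (Function.support f).Finite)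
    {X : Env d} (hX : X ∈ GoodSet d f) {N : ℕ} (S : Fin (N + 1) → Zd d)
    (h0 : S 0 = 0) (ho : ∀ i : Fin N, X i (S i.castSucc) (S i.succ) = true) :
    pathCount d N X ≠ 0 := by
  haveI := paths_finite hfin hX N
  rw [pathCount]
  exact Nat.card_ne_zero.mpr ⟨⟨S, h0, ho⟩, inferInstance⟩

lemma exists_path_of_pathCount_ne_zero {X : Env d} {N : ℕ} (h : pathCount d N X ≠ 0) :
    ∃ S : Fin (N + 1) → Zd d, S 0 = 0 ∧ ∀ i : Fin N, X i (S i.castSucc) (S i.succ) = true := by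
  by_contra hc
  push_neg at hc
  have : IsEmpty {S : Fin (N + 1) → Zd d //
      S 0 = 0 ∧ ∀ i : Fin N, X i (S i.castSucc) (S i.succ) = true} := by
    refine ⟨fun Sp => ?_⟩
    obtain ⟨i, hi⟩ := hc Sp.1 Sp.2.1
    exact hi (Sp.2.2 i)
  exact h (by rw [pathCount]; exact Nat.card_of_isEmpty)

/-- Possible endpoints of `k`-step walks with increments in the support. -/
def Sfin {f : Zd d → ℝ} (hfin : (Function.support f).Finite) : ℕ → Finset (Zd d)
  | 0 => {0}
  | (k + 1) => Finset.image (fun q : Zd d × Zd d => q.1 + q.2)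
      ((Sfin hfin k) ×ˢ hfin.toFinset)

lemma endpoint_mem_Sfin {f : Zd d → ℝ} (hfin : (Function.support f).Finite) :
    ∀ (k : ℕ) (S : Fin (k + 1) → Zd d), S 0 = 0 →
      (∀ i : Fin k, f (S i.succ - S i.castSucc) ≠ 0) → S (Fin.last k) ∈ Sfin hfin k := by
  intro k
  induction k with
  | zero =>
    intro S h0 _
    have : Fin.last 0 = 0 := rfl
    rw [this, h0]
    simp [Sfin]
  | succ k ih =>
    intro S h0 hstep
    have hS' := ih (fun j => S j.castSucc) (by
        simp only [Fin.castSucc_zero]; exact h0)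
      (fun i => by
        have e1 : (i.castSucc : Fin (k + 1)).succ = (i.succ : Fin (k + 1)).castSucc := rfl
        have := hstep i.castSucc
        rw [e1] at this
        exact this)
    have hw : f (S (Fin.last (k + 1)) - S ((Fin.last k).castSucc)) ≠ 0 := by
      have := hstep (Fin.last k)
      have e : (Fin.last k).succ = Fin.last (k + 1) := rfl
      rw [e] at this
      exact this
    have : S (Fin.last (k + 1)) = S ((Fin.last k).castSucc)
        + (S (Fin.last (k + 1)) - S ((Fin.last k).castSucc)) := by abel
    rw [Sfin, this]
    refine Finset.mem_image.2 ⟨(S ((Fin.last k).castSucc),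
      S (Fin.last (k + 1)) - S ((Fin.last k).castSucc)), ?_, rfl⟩
    rw [Finset.mem_product]
    exact ⟨hS', hfin.mem_toFinset.2 hw⟩

/-- Extension of a shifted path by an initial segment. -/
def extendPath (k N : ℕ) (P : Fin (k + 1) → Zd d) (S : Fin (N + 1) → Zd d) :
    Fin (N + k + 1) → Zd d :=
  fun j => if h : (j : ℕ) < k then P ⟨(j : ℕ), Nat.lt_succ_of_lt h⟩
    else S ⟨(j : ℕ) - k, by have := j.isLt; omega⟩ + P (Fin.last k)

lemma extendPath_zero {k N : ℕ} {P : Fin (k + 1) → Zd d} {S : Fin (N + 1) → Zd d}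
    (hP0 : P 0 = 0) (hS0 : S 0 = 0) : extendPath k N P S 0 = 0 := by
  have h0' : extendPath k N P S 0
      = if h : (0 : ℕ) < k then P ⟨0, Nat.lt_succ_of_lt h⟩
        else S ⟨0 - k, by omega⟩ + P (Fin.last k) := rfl
  rw [h0']
  by_cases hk : 0 < k
  · rw [dif_pos hk]
    have e0 : (⟨0, Nat.lt_succ_of_lt hk⟩ : Fin (k + 1)) = 0 := by ext; simp
    rw [e0]; exact hP0
  · rw [dif_neg hk]
    have e0 : (⟨0 - k, by omega⟩ : Fin (N + 1)) = 0 := by ext; simp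
    have e1 : Fin.last k = 0 := by ext; simp; omega
    rw [e0, e1, hS0, hP0]; simp

lemma extendPath_open {X : Env d} {k N : ℕ} {P : Fin (k + 1) → Zd d}
    (hP0 : P 0 = 0) (hPo : ∀ i : Fin k, X i (P i.castSucc) (P i.succ) = true)
    {S : Fin (N + 1) → Zd d} (hS0 : S 0 = 0)
    (hSo : ∀ i : Fin N, shiftEnv d k (P (Fin.last k)) X i (S i.castSucc) (S i.succ) = true)
    (i : Fin (N + k)) :
    X i (extendPath k N P S i.castSucc) (extendPath k N P S i.succ) = true := by
  have hcast : extendPath k N P S i.castSucc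
      = if h : (i : ℕ) < k then P ⟨(i : ℕ), Nat.lt_succ_of_lt h⟩
        else S ⟨(i : ℕ) - k, by have := i.isLt; omega⟩ + P (Fin.last k) := rfl
  have hsucc : extendPath k N P S i.succ
      = if h : (i : ℕ) + 1 < k then P ⟨(i : ℕ) + 1, Nat.lt_succ_of_lt h⟩
        else S ⟨(i : ℕ) + 1 - k, by have := i.isLt; omega⟩ + P (Fin.last k) := rfl
  rw [hcast, hsucc]
  by_cases hik : (i : ℕ) < k
  · rw [dif_pos hik]
    by_cases hik1 : (i : ℕ) + 1 < k
    · rw [dif_pos hik1]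
      exact hPo ⟨(i : ℕ), hik⟩
    · have hik1' : (i : ℕ) + 1 = k := by omega
      rw [dif_neg hik1]
      have e0 : (⟨(i : ℕ) + 1 - k, by have := i.isLt; omega⟩ : Fin (N + 1)) = 0 := by
        ext; simp [hik1']
      have e1 : Fin.last k = (⟨(i : ℕ) + 1, by omega⟩ : Fin (k + 1)) := by
        ext; simp [hik1']
      rw [e0, hS0, zero_add, e1]
      exact hPo ⟨(i : ℕ), hik⟩
  · rw [dif_neg hik, dif_neg (show ¬ (i : ℕ) + 1 < k from by omega)]
    have h1 := hSo ⟨(i : ℕ) - k, by have := i.isLt; omega⟩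
    have hval : shiftEnv d k (P (Fin.last k)) X ((i : ℕ) - k)
        (S ⟨(i : ℕ) - k, by have := i.isLt; omega⟩)
        (S ⟨(i : ℕ) - k + 1, by have := i.isLt; omega⟩)
        = X ((i : ℕ) - k + k)
        (S ⟨(i : ℕ) - k, by have := i.isLt; omega⟩ + P (Fin.last k))
        (S ⟨(i : ℕ) - k + 1, by have := i.isLt; omega⟩ + P (Fin.last k)) := rfl
  -- h1 has form with castSucc/succ; identify them
    have hcs : ((⟨(i : ℕ) - k, by have := i.isLt; omega⟩ : Fin N).castSucc : Fin (N + 1))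
        = ⟨(i : ℕ) - k, by have := i.isLt; omega⟩ := rfl
    have hsc : ((⟨(i : ℕ) - k, by have := i.isLt; omega⟩ : Fin N).succ : Fin (N + 1))
        = ⟨(i : ℕ) - k + 1, by have := i.isLt; omega⟩ := rfl
    rw [hcs, hsc, hval, show (i : ℕ) - k + k = (i : ℕ) from by omega] at h1
    have e2 : (⟨(i : ℕ) + 1 - k, by have := i.isLt; omega⟩ : Fin (N + 1))
        = ⟨(i : ℕ) - k + 1, by have := i.isLt; omega⟩ := by
      ext; simp; omega
    rw [e2]
    exact h1

lemma extendPath_inj (k N : ℕ) (P : Fin (k + 1) → Zd d) :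
    Function.Injective (extendPath k N P) := by
  intro S S' h
  funext j
  have hj := congrFun h ⟨(j : ℕ) + k, by have := j.isLt; omega⟩
  have heval : ∀ (T : Fin (N + 1) → Zd d),
      extendPath k N P T ⟨(j : ℕ) + k, by have := j.isLt; omega⟩
      = if h : (j : ℕ) + k < k then P ⟨(j : ℕ) + k, Nat.lt_succ_of_lt h⟩
        else T ⟨(j : ℕ) + k - k, by have := j.isLt; omega⟩ + P (Fin.last k) :=
    fun T => rfl
  rw [heval, heval] at hj
  simp only [dif_neg (show ¬ (j : ℕ) + k < k from by omega)] at hj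
  have ej : (⟨(j : ℕ) + k - k, by have := j.isLt; omega⟩ : Fin (N + 1)) = j := by ext; simp
  rw [ej] at hj
  exact add_right_cancel hj

/-- The key counting estimate: shifted path counts are dominated. -/
lemma count_le {f : Zd d → ℝ} (hfin : (Function.support f).Finite)
    {X : Env d} (hX : X ∈ GoodSet d f) {k : ℕ} {P : Fin (k + 1) → Zd d}
    (hP0 : P 0 = 0) (hPo : ∀ i : Fin k, X i (P i.castSucc) (P i.succ) = true) (N : ℕ) :
    pathCount d N (shiftEnv d k (P (Fin.last k)) X) ≤ pathCount d (N + k) X := by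
  haveI hfinite : Finite {S : Fin (N + k + 1) → Zd d //
      S 0 = 0 ∧ ∀ i : Fin (N + k), X i (S i.castSucc) (S i.succ) = true} :=
    paths_finite hfin hX (N + k)
  rw [pathCount, pathCount]
  refine Nat.card_le_card_of_injective
    (fun Sp => ⟨extendPath k N P Sp.1,
      extendPath_zero hP0 Sp.2.1, extendPath_open hP0 hPo Sp.2.1 Sp.2.2⟩) ?_
  intro Sp Sp' h
  exact Subtype.ext (extendPath_inj k N P (congrArg Subtype.val h))
lemma percEvent_good_pathCount {f : Zd d → ℝ} (hfin : (Function.support f).Finite)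
    {X : Env d} (hX : X ∈ GoodSet d f) (hperc : X ∈ percEvent d) (N : ℕ) :
    pathCount d N X ≠ 0 := by
  obtain ⟨T, hT0, hTo⟩ := hperc
  refine pathCount_ne_zero_of_path hfin hX (fun i => T i) ?_ ?_
  · simpa using hT0
  · intro i
    simpa only [Fin.coe_castSucc, Fin.val_succ] using hTo i

end Stmt3Aux
namespace Stmt3Aux

variable {d : ℕ}

/-! ### Measurability of path counts -/

lemma measurable_natCard {α : Type*} [Countable α] {β : Type*} [MeasurableSpace β]
    (T : β → α → Prop) (hT : ∀ a, MeasurableSet {X | T X a}) :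
    Measurable fun X => Nat.card {a // T X a} := by
  classical
  have hsetEq : ∀ F : Finset α, MeasurableSet {X : β | ∀ a, T X a ↔ a ∈ F} := by
    intro F
    have : {X : β | ∀ a, T X a ↔ a ∈ F}
        = ⋂ a : α, (if a ∈ F then {X | T X a} else {X | T X a}ᶜ) := by
      ext X
      simp only [Set.mem_setOf_eq, Set.mem_iInter]
      constructor
      · intro h a
        by_cases ha : a ∈ F
        · simp only [if_pos ha]; exact (h a).2 ha
        · simp only [if_neg ha]; exact fun hT' => ha ((h a).1 hT')
      · intro h a
        constructor
        · intro hT'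
          by_contra ha
          have := h a; rw [if_neg ha] at this; exact this hT'
        · intro ha
          have := h a; rw [if_pos ha] at this; exact this
    rw [this]
    refine MeasurableSet.iInter fun a => ?_
    by_cases ha : a ∈ F
    · rw [if_pos ha]; exact hT a
    · rw [if_neg ha]; exact (hT a).compl
  have hcard : ∀ (X : β) (F : Finset α), (∀ a, T X a ↔ a ∈ F) → Nat.card {a // T X a} = F.card := by
    intro X F h
    rw [Nat.card_congr (Equiv.subtypeEquivRight h)]
    rw [Nat.card_eq_fintype_card, Fintype.card_coe]
  apply measurable_to_countable'
  intro m
  match m with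
  | Nat.succ m' =>
    have : (fun X => Nat.card {a // T X a}) ⁻¹' {m' + 1}
        = ⋃ (F : {F : Finset α // F.card = m' + 1}), {X : β | ∀ a, T X a ↔ a ∈ F.1} := by
      ext X
      simp only [Set.mem_preimage, Set.mem_singleton_iff, Set.mem_iUnion]
      constructor
      · intro h
        have hfin : Finite {a // T X a} := by
          by_contra hinf
          rw [not_finite_iff_infinite] at hinf
          rw [Nat.card_eq_zero_of_infinite] at h
          exact Nat.succ_ne_zero m' h.symm
        have hfin' : {a | T X a}.Finite := hfin
        refine ⟨⟨hfin'.toFinset, ?_⟩, fun a => by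
          simp only [Set.Finite.mem_toFinset, Set.mem_setOf_eq]⟩
        rw [← hcard X hfin'.toFinset (fun a => by
          simp only [Set.Finite.mem_toFinset, Set.mem_setOf_eq])]
        exact h
      · rintro ⟨F, hF⟩
        rw [hcard X F.1 hF]
        exact F.2
    rw [this]
    exact MeasurableSet.iUnion fun F : {F : Finset α // F.card = m' + 1} => hsetEq F.1
  | 0 =>
    have : (fun X => Nat.card {a // T X a}) ⁻¹' {0}
        = (⋃ (F : {F : Finset α // F.Nonempty}), {X : β | ∀ a, T X a ↔ a ∈ F.1})ᶜ := by
      ext X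
      simp only [Set.mem_preimage, Set.mem_singleton_iff, Set.mem_compl_iff, Set.mem_iUnion]
      constructor
      · rintro h ⟨F, hF⟩
        have hc := hcard X F.1 hF
        rw [h] at hc
        have hpos := Finset.card_pos.2 F.2
        omega
      · intro h
        by_contra hne
        obtain ⟨m', hm'⟩ : ∃ m', Nat.card {a // T X a} = m' + 1 :=
          ⟨Nat.card {a // T X a} - 1, by omega⟩
        have hfin : Finite {a // T X a} := by
          by_contra hinf
          rw [not_finite_iff_infinite] at hinf
          rw [Nat.card_eq_zero_of_infinite] at hm'
          exact Nat.succ_ne_zero m' hm'.symm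
        have hfin' : {a | T X a}.Finite := hfin
        have hmem : ∀ a, T X a ↔ a ∈ hfin'.toFinset := fun a => by
          simp only [Set.Finite.mem_toFinset, Set.mem_setOf_eq]
        have hFn : hfin'.toFinset.Nonempty := by
          rw [← Finset.card_pos, ← hcard X hfin'.toFinset hmem]
          omega
        exact h ⟨⟨hfin'.toFinset, hFn⟩, hmem⟩
    rw [this]
    exact (MeasurableSet.iUnion fun F : {F : Finset α // F.Nonempty} => hsetEq F.1).compl

lemma measurable_pathCount (N : ℕ) : Measurable (pathCount d N) := by
  have : pathCount d N = fun X => Nat.card {S : Fin (N + 1) → Zd d //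
      S 0 = 0 ∧ ∀ i : Fin N, X i (S i.castSucc) (S i.succ) = true} := rfl
  rw [this]
  refine measurable_natCard _ fun S => ?_
  by_cases h0 : S 0 = 0
  · have : {X : Env d | S 0 = 0 ∧ ∀ i : Fin N, X i (S i.castSucc) (S i.succ) = true}
        = ⋂ i : Fin N, {X : Env d | X i (S i.castSucc) (S i.succ) = true} := by
      ext X; simp [h0]
    rw [this]
    exact MeasurableSet.iInter fun i => measurableSet_eval' _ _ _ _
  · have : {X : Env d | S 0 = 0 ∧ ∀ i : Fin N, X i (S i.castSucc) (S i.succ) = true} = ∅ := by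
      ext X; simp [h0]
    rw [this]; exact MeasurableSet.empty

lemma measurable_growthTerm (N : ℕ) : Measurable fun X : Env d => growthTerm d X N := by
  have : (fun X : Env d => growthTerm d X N)
      = fun X => if pathCount d N X = 0 then (⊥ : EReal)
          else ((Real.log (pathCount d N X) / N : ℝ) : EReal) := rfl
  rw [this]
  refine Measurable.ite ?_ measurable_const ?_
  · exact (measurable_pathCount N) (measurableSet_singleton 0)
  · have : (fun X : Env d => ((Real.log (pathCount d N X) / N : ℝ) : EReal))
        = (fun n : ℕ => ((Real.log n / N : ℝ) : EReal)) ∘ (pathCount d N) := rfl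
    rw [this]
    exact measurable_from_nat.comp (measurable_pathCount N)

lemma measurable_limsupGrowth : Measurable fun X : Env d => limsup (growthTerm d X) atTop :=
  Measurable.limsup fun N => measurable_growthTerm N

/-! ### EReal helpers -/

lemma EReal.le_of_forall_real_lt_le {a b : EReal} (h : ∀ r : ℝ, (r : EReal) < a → (r : EReal) ≤ b) :
    a ≤ b := by
  by_contra hab
  push_neg at hab
  obtain ⟨x, hbx, hxa⟩ := EReal.exists_between_coe_real hab
  have := h x hxa
  exact absurd (lt_of_lt_of_le hbx this) (lt_irrefl _)

/-! ### The comparison of growth rates under shifting along an open path -/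

lemma fact1 {f : Zd d → ℝ} (hfin : (Function.support f).Finite)
    {X : Env d} (hX : X ∈ GoodSet d f) {k : ℕ} {P : Fin (k + 1) → Zd d}
    (hP0 : P 0 = 0) (hPo : ∀ i : Fin k, X i (P i.castSucc) (P i.succ) = true) :
    limsup (growthTerm d (shiftEnv d k (P (Fin.last k)) X)) atTop
      ≤ limsup (growthTerm d X) atTop := by
  set θ := shiftEnv d k (P (Fin.last k)) X with hθ
  refine EReal.le_of_forall_real_lt_le fun r hr => ?_
  obtain ⟨r', hrr', hr'L⟩ := EReal.exists_between_coe_real hr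
  rw [EReal.coe_lt_coe_iff] at hrr'
  have hfreq : ∃ᶠ N in atTop, (r' : EReal) < growthTerm d θ N :=
    frequently_lt_of_lt_limsup (by isBoundedDefault) hr'L
  -- threshold
  set N₀ : ℕ := max 1 ⌈(|r'| * k) / (r' - r)⌉₊ with hN₀
  refine le_limsup_of_frequently_le ?_ (by isBoundedDefault)
  rw [frequently_atTop] at hfreq ⊢
  intro b
  obtain ⟨N, hNb, hNval⟩ := hfreq (max b N₀)
  refine ⟨N + k, le_trans (le_trans (le_max_left b N₀) hNb) (Nat.le_add_right N k), ?_⟩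
  -- basic facts about N
  have hNN₀ : N₀ ≤ N := le_trans (le_max_right b N₀) hNb
  have hN1 : 1 ≤ N := le_trans (le_max_left 1 _) hNN₀
  have hNceil : (⌈(|r'| * k) / (r' - r)⌉₊ : ℝ) ≤ N := by
    exact_mod_cast Nat.cast_le.2 (le_trans (le_max_right 1 _) hNN₀)
  have hNge : (|r'| * k) / (r' - r) ≤ (N : ℝ) := le_trans (Nat.le_ceil _) hNceil
  -- θ count is positive
  have hZθ : pathCount d N θ ≠ 0 := by
    intro h0
    rw [growthTerm, if_pos h0] at hNval
    exact absurd hNval (by simp)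
  rw [growthTerm, if_neg hZθ] at hNval
  rw [EReal.coe_lt_coe_iff] at hNval
  -- X count dominates
  have hle := count_le hfin hX hP0 hPo N
  have hZX : pathCount d (N + k) X ≠ 0 := by
    intro h0
    rw [h0] at hle
    exact hZθ (Nat.le_zero.mp hle)
  rw [growthTerm, if_neg hZX]
  rw [EReal.coe_le_coe_iff]
  -- real arithmetic
  have hNpos : (0 : ℝ) < N := by exact_mod_cast hN1
  have hNkpos : (0 : ℝ) < ((N + k : ℕ) : ℝ) := by positivity
  have hlog : Real.log (pathCount d N θ) ≤ Real.log (pathCount d (N + k) X) := by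
    refine Real.log_le_log ?_ ?_
    · have : 1 ≤ pathCount d N θ := Nat.pos_of_ne_zero hZθ
      exact_mod_cast this
    · exact_mod_cast hle
  have hr'N : r' * N < Real.log (pathCount d N θ) := by
    rw [lt_div_iff₀ hNpos] at hNval
    linarith
  have hrr'd : 0 < r' - r := by linarith
  have hkey : r * ((N + k : ℕ) : ℝ) ≤ r' * N := by
    have h1 : |r'| * k ≤ (r' - r) * N := by
      rw [div_le_iff₀ hrr'd] at hNge
      linarith
    have h2 : r * k ≤ |r'| * k := by
      have : r ≤ |r'| := le_trans (le_of_lt hrr') (le_abs_self r')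
      exact mul_le_mul_of_nonneg_right this (Nat.cast_nonneg k)
    have hcast : ((N + k : ℕ) : ℝ) = (N : ℝ) + (k : ℝ) := by push_cast; ring
    rw [hcast]
    nlinarith
  rw [le_div_iff₀ hNkpos]
  exact le_of_lt (lt_of_le_of_lt hkey (lt_of_lt_of_le hr'N hlog))

end Stmt3Aux
open scoped ENNReal

/-- On the percolation event, `𝓧 = limsup_N N⁻¹ log Z_N` is
almost surely constant under `ℙ_p(· ∣ 𝓟)`. -/
theorem stmt3 (d : ℕ) (f : Zd d → ℝ) (hf0 : ∀ z, 0 ≤ f z)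
    (hfin : (Function.support f).Finite) (hsum : ∑ᶠ z, f z = 1)
    (p : ℝ) (hp : 0 < p) (hpmax : ∀ z, p * f z ≤ 1)
    (μ : Measure (Env d)) [IsProbabilityMeasure μ]
    (henv : bernoulliEnv d p f μ)
    (hP : 0 < μ (percEvent d)) :
    ∃ c : EReal, ∀ᵐ X ∂(μ[|percEvent d]), Filter.limsup (growthTerm d X) atTop = c := by
  classical
  obtain ⟨hind, hmarg⟩ := henv
  -- notations
  set g : Env d → EReal := fun X => limsup (growthTerm d X) atTop with hgdef
  have hgmeas : Measurable g := Stmt3Aux.measurable_limsupGrowth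
  have hGoodm : MeasurableSet (Stmt3Aux.GoodSet d f) := Stmt3Aux.measurableSet_GoodSet f
  have hGoodc : μ (Stmt3Aux.GoodSet d f)ᶜ = 0 := Stmt3Aux.goodSet_compl_null hmarg
  set P2 : Set (Env d) := {X | ∀ N, pathCount d N X ≠ 0} with hP2def
  have hP2m : MeasurableSet P2 := by
    have : P2 = ⋂ N, ((pathCount d N) ⁻¹' {0})ᶜ := by
      ext X; simp [hP2def]
    rw [this]
    exact MeasurableSet.iInter fun N =>
      ((Stmt3Aux.measurable_pathCount N) (measurableSet_singleton 0)).compl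
  set B : EReal → Set (Env d) := fun a => P2 ∩ Stmt3Aux.GoodSet d f ∩ {X | a < g X} with hBdef
  have hBm : ∀ a, MeasurableSet (B a) :=
    fun a => (hP2m.inter hGoodm).inter (hgmeas measurableSet_Ioi)
  -- reach events and the least-endpoint partition
  obtain ⟨enc, hencinj⟩ := exists_injective_nat (Zd d)
  set reach : ℕ → Zd d → Set (Env d) := fun k x =>
    {X | ∃ S : Fin (k + 1) → Zd d, S 0 = 0 ∧ S (Fin.last k) = x ∧
      ∀ i : Fin k, X i (S i.castSucc) (S i.succ) = true} with hreachdef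
  have hreachm : ∀ (k : ℕ) (x : Zd d), MeasurableSet[cylFilt d k] (reach k x) := by
    intro k x
    refine MeasurableSpace.measurableSet_comap.2
      ⟨⋃ (Sp : {S : Fin (k + 1) → Zd d // S 0 = 0 ∧ S (Fin.last k) = x}),
        ⋂ i : Fin k, {Y : Fin k → Zd d → Zd d → Bool | Y i (Sp.1 i.castSucc) (Sp.1 i.succ) = true},
        ?_, ?_⟩
    · exact MeasurableSet.iUnion fun Sp => MeasurableSet.iInter fun i =>
        Stmt3Aux.measurableSet_eval' _ _ _ _
    · ext X
      simp only [Set.mem_preimage, Set.mem_iUnion, Set.mem_iInter, Set.mem_setOf_eq,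
        hreachdef]
      constructor
      · rintro ⟨Sp, hSp⟩; exact ⟨Sp.1, Sp.2.1, Sp.2.2, hSp⟩
      · rintro ⟨S, h0, hlast, ho⟩; exact ⟨⟨S, h0, hlast⟩, ho⟩
  set Pev : ℕ → Zd d → Set (Env d) := fun k x =>
    reach k x ∩ ⋂ (y : {y : Zd d // y ∈ Stmt3Aux.Sfin hfin k ∧ enc y < enc x}),
      (reach k y.1)ᶜ with hPevdef
  have hPevm : ∀ k x, MeasurableSet[cylFilt d k] (Pev k x) :=
    fun k x => (hreachm k x).inter (MeasurableSet.iInter fun y => (hreachm k y.1).compl)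
  have hPevd : ∀ (k : ℕ), ∀ x ∈ Stmt3Aux.Sfin hfin k, ∀ y ∈ Stmt3Aux.Sfin hfin k,
      x ≠ y → Disjoint (Pev k x) (Pev k y) := by
    intro k x hx y hy hxy
    rw [Set.disjoint_left]
    intro X hXx hXy
    rcases Nat.lt_or_ge (enc x) (enc y) with h | h
    · exact (Set.mem_iInter.1 hXy.2 ⟨x, hx, h⟩) hXx.1
    · have hne' : enc x ≠ enc y := fun he => hxy (hencinj he)
      have h' : enc y < enc x := by omega
      exact (Set.mem_iInter.1 hXx.2 ⟨y, hy, h'⟩) hXy.1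
  -- the restart argument
  have restart : ∀ a : EReal, μ (B a) ≠ 0 →
      μ (P2 ∩ Stmt3Aux.GoodSet d f ∩ {X | g X ≤ a}) = 0 := by
    intro a hβ
    set G := B a with hGdef
    set β := μ G with hβdef
    set A := P2 ∩ Stmt3Aux.GoodSet d f ∩ {X | g X ≤ a} with hAdef
    have hAm : MeasurableSet A := (hP2m.inter hGoodm).inter (hgmeas measurableSet_Iic)
    have hGm : MeasurableSet G := hBm a
    have hEmeas : ∀ (k : ℕ) (v : Zd d), MeasurableSet (shiftEnv d k v ⁻¹' G) :=
      fun k v => (Stmt3Aux.measurable_shiftEnv k v) hGm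
    have hEβ : ∀ (k : ℕ) (v : Zd d), μ (shiftEnv d k v ⁻¹' G) = β := by
      intro k v
      rw [← Measure.map_apply (Stmt3Aux.measurable_shiftEnv k v) hGm,
        Stmt3Aux.map_shiftEnv hind hmarg k v]
    have hElater : ∀ (k : ℕ) (v : Zd d),
        MeasurableSet[Stmt3Aux.laterAlg d k] (shiftEnv d k v ⁻¹' G) := by
      intro k v
      refine MeasurableSpace.measurableSet_comap.2
        ⟨(fun Y : Env d => fun n x y => Y n (x + v) (y + v)) ⁻¹' G, ?_, ?_⟩
      · have hms : Measurable (fun Y : Env d => fun n (x y : Zd d) => Y n (x + v) (y + v)) := by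
          rw [measurable_pi_iff]; intro n
          rw [measurable_pi_iff]; intro x
          rw [measurable_pi_iff]; intro y
          exact Stmt3Aux.measurable_eval' n (x + v) (y + v)
        exact hms hGm
      · rfl
    have hcover : ∀ (k : ℕ) (X : Env d), X ∈ A → ∃ x ∈ Stmt3Aux.Sfin hfin k, X ∈ Pev k x := by
      intro k X hXA
      obtain ⟨⟨hP2X, hGoodX⟩, _⟩ := hXA
      obtain ⟨S, hS0, hSo⟩ := Stmt3Aux.exists_path_of_pathCount_ne_zero (hP2X k)
      have hend : S (Fin.last k) ∈ Stmt3Aux.Sfin hfin k :=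
        Stmt3Aux.endpoint_mem_Sfin hfin k S hS0
          (fun i => hGoodX i _ _ (hSo i))
      set R := (Stmt3Aux.Sfin hfin k).filter (fun y => X ∈ reach k y) with hR
      have hRne : R.Nonempty :=
        ⟨S (Fin.last k), Finset.mem_filter.2 ⟨hend, ⟨S, hS0, rfl, hSo⟩⟩⟩
      obtain ⟨x, hxR, hxmin⟩ := R.exists_min_image enc hRne
      have hxS := (Finset.mem_filter.1 hxR).1
      have hxreach := (Finset.mem_filter.1 hxR).2
      refine ⟨x, hxS, hxreach, ?_⟩
      refine Set.mem_iInter.2 fun y => ?_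
      intro hXy
      have hyR : y.1 ∈ R := Finset.mem_filter.2 ⟨y.2.1, hXy⟩
      have := hxmin y.1 hyR
      have := y.2.2
      omega
    have hexcl : ∀ (k : ℕ) (x : Zd d) (X : Env d), X ∈ A → X ∈ reach k x →
        X ∉ shiftEnv d k x ⁻¹' G := by
      intro k x X hXA hXr hXE
      obtain ⟨⟨hP2X, hGoodX⟩, hga⟩ := hXA
      obtain ⟨S, hS0, hSlast, hSo⟩ := hXr
      have h1 := Stmt3Aux.fact1 hfin hGoodX hS0 hSo
      rw [hSlast] at h1
      have h2 : a < g (shiftEnv d k x X) := hXE.2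
      exact absurd ((h2.trans_le h1).trans_le hga) (lt_irrefl a)
    have key : ∀ ε : ℝ≥0∞, ε ≠ 0 → μ A ≤ (1 - β) * μ A + 2 * ε := by
      intro ε hε
      obtain ⟨k, F, hFk, hd1, hd2⟩ := Stmt3Aux.approx_cylFilt (μ := μ) A hAm ε hε
      have hFm : MeasurableSet F := Stmt3Aux.cylFilt_le k _ hFk
      have hindep := Stmt3Aux.indep_filt_later hind k
      have hprod : ∀ x : Zd d, μ ((F ∩ Pev k x) ∩ (shiftEnv d k x ⁻¹' G)ᶜ)
          = μ (F ∩ Pev k x) * (1 - β) := by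
        intro x
        have h1 : MeasurableSet[cylFilt d k] (F ∩ Pev k x) := hFk.inter (hPevm k x)
        have h2 : MeasurableSet[Stmt3Aux.laterAlg d k] ((shiftEnv d k x ⁻¹' G)ᶜ) :=
          (hElater k x).compl
        rw [(ProbabilityTheory.Indep_iff _ _ _).1 hindep _ _ h1 h2]
        congr 1
        rw [prob_compl_eq_one_sub (hEmeas k x), hEβ k x]
      have hsub : A ∩ F ⊆ ⋃ x ∈ Stmt3Aux.Sfin hfin k,
          ((F ∩ Pev k x) ∩ (shiftEnv d k x ⁻¹' G)ᶜ) := by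
        rintro X ⟨hXA, hXF⟩
        obtain ⟨x, hxS, hxPev⟩ := hcover k X hXA
        exact Set.mem_biUnion hxS ⟨⟨hXF, hxPev⟩, hexcl k x X hXA hxPev.1⟩
      have hdisjF : Set.PairwiseDisjoint ↑(Stmt3Aux.Sfin hfin k)
          (fun x => (F ∩ Pev k x) ∩ (shiftEnv d k x ⁻¹' G)ᶜ) := by
        intro x hx y hy hxy
        refine Set.disjoint_left.2 fun X hXx hXy => ?_
        exact Set.disjoint_left.1 (hPevd k x hx y hy hxy) hXx.1.2 hXy.1.2
      have hmeasx : ∀ x ∈ Stmt3Aux.Sfin hfin k,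
          MeasurableSet ((F ∩ Pev k x) ∩ (shiftEnv d k x ⁻¹' G)ᶜ) := fun x _ =>
        (hFm.inter (Stmt3Aux.cylFilt_le k _ (hPevm k x))).inter (hEmeas k x).compl
      have hdisjF2 : Set.PairwiseDisjoint ↑(Stmt3Aux.Sfin hfin k)
          (fun x => F ∩ Pev k x) := by
        intro x hx y hy hxy
        refine Set.disjoint_left.2 fun X hXx hXy => ?_
        exact Set.disjoint_left.1 (hPevd k x hx y hy hxy) hXx.2 hXy.2
      have hmeasx2 : ∀ x ∈ Stmt3Aux.Sfin hfin k, MeasurableSet (F ∩ Pev k x) := fun x _ =>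
        hFm.inter (Stmt3Aux.cylFilt_le k _ (hPevm k x))
      have hμF : μ F ≤ μ A + ε := by
        calc μ F ≤ μ (F ∩ A) + μ (F \ A) := measure_le_inter_add_diff μ F A
        _ ≤ μ A + ε := add_le_add (measure_mono Set.inter_subset_right) hd2
      calc μ A ≤ μ (A ∩ F) + μ (A \ F) := measure_le_inter_add_diff μ A F
      _ ≤ μ (⋃ x ∈ Stmt3Aux.Sfin hfin k, ((F ∩ Pev k x) ∩ (shiftEnv d k x ⁻¹' G)ᶜ)) + ε :=
            add_le_add (measure_mono hsub) hd1
      _ = (∑ x ∈ Stmt3Aux.Sfin hfin k, μ ((F ∩ Pev k x) ∩ (shiftEnv d k x ⁻¹' G)ᶜ)) + ε := by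
            rw [measure_biUnion_finset hdisjF hmeasx]
      _ = (∑ x ∈ Stmt3Aux.Sfin hfin k, μ (F ∩ Pev k x) * (1 - β)) + ε := by
            congr 1; exact Finset.sum_congr rfl fun x _ => hprod x
      _ = (∑ x ∈ Stmt3Aux.Sfin hfin k, μ (F ∩ Pev k x)) * (1 - β) + ε := by
            rw [Finset.sum_mul]
      _ = μ (⋃ x ∈ Stmt3Aux.Sfin hfin k, (F ∩ Pev k x)) * (1 - β) + ε := by
            rw [measure_biUnion_finset hdisjF2 hmeasx2]
      _ ≤ μ F * (1 - β) + ε := by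
            have hFle : μ (⋃ x ∈ Stmt3Aux.Sfin hfin k, (F ∩ Pev k x)) ≤ μ F :=
              measure_mono (Set.iUnion₂_subset fun x _ => Set.inter_subset_left)
            exact add_le_add (mul_le_mul_left hFle _) le_rfl
      _ ≤ (μ A + ε) * (1 - β) + ε := add_le_add (mul_le_mul_left hμF _) le_rfl
      _ = μ A * (1 - β) + ε * (1 - β) + ε := by ring
      _ ≤ μ A * (1 - β) + ε + ε := by
            gcongr
            calc ε * (1 - β) ≤ ε * 1 := by gcongr; exact tsub_le_self
            _ = ε := mul_one ε
      _ = (1 - β) * μ A + 2 * ε := by ring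
    have hle : μ A ≤ (1 - β) * μ A := by
      refine ENNReal.le_of_forall_pos_le_add fun ε hεpos hblt => ?_
      have hεne : ((ε : ℝ≥0∞) / 2) ≠ 0 := by
        simp only [ne_eq, ENNReal.div_eq_zero_iff, ENNReal.coe_eq_zero, not_or]
        exact ⟨by exact_mod_cast hεpos.ne', by simp⟩
      have h2 : 2 * ((ε : ℝ≥0∞) / 2) = ε := ENNReal.mul_div_cancel' (by simp) (by simp)
      calc μ A ≤ (1 - β) * μ A + 2 * ((ε : ℝ≥0∞) / 2) := key _ hεne
      _ = (1 - β) * μ A + ε := by rw [h2]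
    by_contra hA0
    have hlt2 : (1 - β) * μ A < 1 * μ A := by
      rw [ENNReal.mul_lt_mul_iff_left hA0 (measure_ne_top μ A)]
      exact ENNReal.sub_lt_self ENNReal.one_ne_top one_ne_zero hβ
    rw [one_mul] at hlt2
    exact lt_irrefl _ (lt_of_le_of_lt hle hlt2)
  -- the constant
  set c : EReal := sInf {a : EReal | μ (B a) = 0} with hcdef
  have hupper : ∀ a', c < a' → μ (B a') = 0 := by
    intro a' ha'
    obtain ⟨a, haS, haa'⟩ := sInf_lt_iff.1 ha'
    refine measure_mono_null ?_ haS
    intro X hX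
    exact ⟨hX.1, lt_trans haa' hX.2⟩
  have hlow : ∀ a, a < c → μ (B a) ≠ 0 := by
    intro a ha h0
    exact absurd (sInf_le (show a ∈ {a' : EReal | μ (B a') = 0} from h0)) (not_le.2 ha)
  have hup0 : μ (P2 ∩ Stmt3Aux.GoodSet d f ∩ {X | c < g X}) = 0 := by
    refine measure_mono_null
      (?_ : _ ⊆ ⋃ (q : {q : ℚ // c < ((q : ℝ) : EReal)}), B ((q.1 : ℝ) : EReal))
      (measure_iUnion_null fun q => hupper _ q.2)
    intro X hX
    obtain ⟨q, hq1, hq2⟩ := EReal.exists_rat_btwn_of_lt hX.2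
    exact Set.mem_iUnion.2 ⟨⟨q, hq1⟩, hX.1, hq2⟩
  have hdown0 : μ (P2 ∩ Stmt3Aux.GoodSet d f ∩ {X | g X < c}) = 0 := by
    refine measure_mono_null
      (?_ : _ ⊆ ⋃ (q : {q : ℚ // ((q : ℝ) : EReal) < c}),
        P2 ∩ Stmt3Aux.GoodSet d f ∩ {X | g X ≤ ((q.1 : ℝ) : EReal)})
      (measure_iUnion_null fun q => restart _ (hlow _ q.2))
    intro X hX
    obtain ⟨q, hq1, hq2⟩ := EReal.exists_rat_btwn_of_lt hX.2
    exact Set.mem_iUnion.2 ⟨⟨q, hq2⟩, hX.1, le_of_lt hq1⟩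
  -- assemble
  refine ⟨c, ?_⟩
  rw [ae_iff]
  have hsetm : MeasurableSet {X : Env d | ¬ limsup (growthTerm d X) atTop = c} :=
    ((hgmeas (measurableSet_singleton c)).compl)
  rw [ProbabilityTheory.cond, Measure.smul_apply, Measure.restrict_apply hsetm, smul_eq_mul]
  have hinter : μ ({X : Env d | ¬ limsup (growthTerm d X) atTop = c} ∩ percEvent d) = 0 := by
    have hsub : {X : Env d | ¬ limsup (growthTerm d X) atTop = c} ∩ percEvent d ⊆
        (P2 ∩ Stmt3Aux.GoodSet d f ∩ {X | g X < c}) ∪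
          (P2 ∩ Stmt3Aux.GoodSet d f ∩ {X | c < g X}) ∪ (Stmt3Aux.GoodSet d f)ᶜ := by
      rintro X ⟨hne, hperc⟩
      by_cases hGoodX : X ∈ Stmt3Aux.GoodSet d f
      · have hP2X : X ∈ P2 := fun N =>
          Stmt3Aux.percEvent_good_pathCount hfin hGoodX hperc N
        rcases lt_or_gt_of_ne hne with h | h
        · exact Or.inl (Or.inl ⟨⟨hP2X, hGoodX⟩, h⟩)
        · exact Or.inl (Or.inr ⟨⟨hP2X, hGoodX⟩, h⟩)
      · exact Or.inr hGoodX
    refine measure_mono_null hsub ?_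
    refine measure_union_null (measure_union_null hdown0 hup0) hGoodc
  rw [hinter, mul_zero]
end
end

section
/- Couple all percolation parameters by setting $X_{(n,x),(n+1,y)}(p) := \mathbf{1}\{U_{(n,x),(n+1,y)} \le f(y-x)p\}$ for an i.i.d. family of Uniform$[0,1]$ variables $U$. Then for $p'\le p$ (with $p>0$), $\mathbb{E}[W_N(p')\mid \mathcal{F}_p] = W_N(p)$, where $\mathcal{F}_p$ is the sigma-algebra generated by the variables $X(p)$ and $W_N(q)=q^{-N}Z_N(X(q))$. -/
open MeasureTheory ProbabilityTheory Filter

noncomputable section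

namespace Stmt5Aux

variable {Ω : Type} [MeasurableSpace Ω]

/-- Edge index type. -/
abbrev EIdx (d : ℕ) := ℕ × Zd d × Zd d

/-- Edge weight. -/
def fe (d : ℕ) (f : Zd d → ℝ) (e : EIdx d) : ℝ := f (e.2.2 - e.2.1)

/-- Uniform variable of an edge. -/
def Uof {d : ℕ} (U : ℕ → Zd d → Zd d → Ω → ℝ) (e : EIdx d) : Ω → ℝ := U e.1 e.2.1 e.2.2

/-- A level-`p` cylinder event. -/
def cylSet {d : ℕ} (f : Zd d → ℝ) (U : ℕ → Zd d → Zd d → Ω → ℝ) (p : ℝ)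
    (E : Finset (EIdx d)) (b : EIdx d → Bool) : Set Ω :=
  {ω | ∀ e ∈ E, decide (Uof U e ω ≤ fe d f e * p) = b e}

/-- The π-system of level-`p` cylinder events. -/
def cylC {d : ℕ} (f : Zd d → ℝ) (U : ℕ → Zd d → Zd d → Ω → ℝ) (p : ℝ) : Set (Set Ω) :=
  {s | ∃ E b, s = cylSet f U p E b}

/-- The `i`-th edge of a path `S`. -/
def pathEdge (d N : ℕ) (S : Fin (N + 1) → Zd d) (i : Fin N) : EIdx d :=
  ((i : ℕ), S i.castSucc, S i.succ)

/-- The event that all edges of a path `S` are open at level `q`. -/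
def pathSet {d : ℕ} (N : ℕ) (f : Zd d → ℝ) (U : ℕ → Zd d → Zd d → Ω → ℝ) (q : ℝ)
    (S : Fin (N + 1) → Zd d) : Set Ω :=
  ⋂ i : Fin N, {ω | Uof U (pathEdge d N S i) ω ≤ fe d f (pathEdge d N S i) * q}

/-- Reconstruct a path from its increments. -/
def recon (d N : ℕ) (g : Fin N → Zd d) : Fin (N + 1) → Zd d :=
  fun j => ∑ k ∈ Finset.univ.filter (fun k : Fin N => (k : ℕ) < (j : ℕ)), g k

/-- The finite set of admissible paths. -/
def PF (d N : ℕ) (f : Zd d → ℝ) (hfin : (Function.support f).Finite) :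
    Finset (Fin (N + 1) → Zd d) :=
  (Fintype.piFinset fun _ : Fin N => hfin.toFinset).image (recon d N)

lemma pathEdge_injective (d N : ℕ) (S : Fin (N + 1) → Zd d) :
    Function.Injective (pathEdge d N S) := by
  intro i j h
  have := congrArg Prod.fst h
  exact Fin.ext this

lemma recon_zero (d N : ℕ) (g : Fin N → Zd d) : recon d N g 0 = 0 := by
  unfold recon
  convert Finset.sum_empty
  ext k
  simp

lemma recon_succ (d N : ℕ) (g : Fin N → Zd d) (i : Fin N) :
    recon d N g i.succ = recon d N g i.castSucc + g i := by
  unfold recon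
  have h : Finset.univ.filter (fun k : Fin N => (k : ℕ) < ((i.succ : Fin (N+1)) : ℕ)) =
      insert i (Finset.univ.filter (fun k : Fin N => (k : ℕ) < ((i.castSucc : Fin (N+1)) : ℕ))) := by
    ext k
    simp only [Finset.mem_filter, Finset.mem_univ, true_and, Finset.mem_insert,
      Fin.val_succ, Fin.coe_castSucc]
    constructor
    · intro hk
      rcases Nat.lt_succ_iff_lt_or_eq.mp hk with h | h
      · exact Or.inr h
      · exact Or.inl (Fin.ext h)
    · rintro (rfl | hk)
      · omega
      · omega
  rw [h, Finset.sum_insert (by simp)]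
  abel

lemma recon_eq_self {d N : ℕ} {S : Fin (N + 1) → Zd d} (h0 : S 0 = 0) :
    recon d N (fun i => S i.succ - S i.castSucc) = S := by
  funext j
  rcases j with ⟨m, hm⟩
  induction m with
  | zero =>
      have : (⟨0, hm⟩ : Fin (N+1)) = 0 := rfl
      rw [this, recon_zero, h0]
  | succ m ih =>
      have hmN : m < N := by omega
      have h1 : (⟨m + 1, hm⟩ : Fin (N+1)) = (⟨m, hmN⟩ : Fin N).succ := rfl
      have h2 : (⟨m, Nat.lt_of_succ_lt hm⟩ : Fin (N+1)) = (⟨m, hmN⟩ : Fin N).castSucc := rfl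
      rw [h1, recon_succ]
      rw [← h2, ih (Nat.lt_of_succ_lt hm)]
      rw [h2]
      abel

lemma mem_PF {d N : ℕ} {f : Zd d → ℝ} (hfin : (Function.support f).Finite)
    {S : Fin (N + 1) → Zd d} (h0 : S 0 = 0)
    (hstep : ∀ i : Fin N, S i.succ - S i.castSucc ∈ Function.support f) :
    S ∈ PF d N f hfin := by
  refine Finset.mem_image.mpr ⟨fun i => S i.succ - S i.castSucc, ?_, recon_eq_self h0⟩
  exact Fintype.mem_piFinset.mpr fun i => hfin.mem_toFinset.mpr (hstep i)

lemma PF_zero {d N : ℕ} {f : Zd d → ℝ} (hfin : (Function.support f).Finite)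
    {S : Fin (N + 1) → Zd d} (hS : S ∈ PF d N f hfin) : S 0 = 0 := by
  rcases Finset.mem_image.mp hS with ⟨g, _, rfl⟩
  exact recon_zero d N g

section Measure

variable {d : ℕ} (μ : Measure Ω) [IsProbabilityMeasure μ]
  (f : Zd d → ℝ) (U : ℕ → Zd d → Zd d → Ω → ℝ)

lemma measDec (c : ℝ) (b : Bool) : MeasurableSet {u : ℝ | decide (u ≤ c) = b} := by
  cases b
  · have : {u : ℝ | decide (u ≤ c) = false} = (Set.Iic c)ᶜ := by
      ext u; simp
    rw [this]; exact measurableSet_Iic.compl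
  · have : {u : ℝ | decide (u ≤ c) = true} = Set.Iic c := by
      ext u; simp
    rw [this]; exact measurableSet_Iic

lemma measurable_coupledEnv (hUmeas : ∀ n x y, Measurable (U n x y)) (q : ℝ) :
    Measurable (coupledEnv d f U q) := by
  refine measurable_pi_iff.mpr fun n => measurable_pi_iff.mpr fun x =>
    measurable_pi_iff.mpr fun y => measurable_to_countable' fun b => ?_
  have : (fun ω => coupledEnv d f U q ω n x y) ⁻¹' {b} =
      (U n x y) ⁻¹' {u : ℝ | decide (u ≤ f (y - x) * q) = b} := rfl
  rw [this]
  exact hUmeas n x y (measDec _ b)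

lemma measurableSet_edge (hUmeas : ∀ n x y, Measurable (U n x y)) (p : ℝ) (n : ℕ)
    (x y : Zd d) (b : Bool) :
    MeasurableSet[MeasurableSpace.comap (coupledEnv d f U p) inferInstance]
      {ω | coupledEnv d f U p ω n x y = b} := by
  refine ⟨{X : Env d | X n x y = b}, ?_, rfl⟩
  have hmeas : Measurable fun X : Env d => X n x y :=
    (measurable_pi_apply y).comp ((measurable_pi_apply x).comp (measurable_pi_apply n))
  exact hmeas (measurableSet_singleton b)

lemma comap_eq_generateFrom (hUmeas : ∀ n x y, Measurable (U n x y)) (p : ℝ) :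
    MeasurableSpace.comap (coupledEnv d f U p) inferInstance =
      MeasurableSpace.generateFrom (cylC f U p) := by
  apply le_antisymm
  · rw [← measurable_iff_comap_le]
    letI : MeasurableSpace Ω := MeasurableSpace.generateFrom (cylC f U p)
    refine measurable_pi_iff.mpr fun n => measurable_pi_iff.mpr fun x =>
      measurable_pi_iff.mpr fun y => measurable_to_countable' fun b => ?_
    apply MeasurableSpace.measurableSet_generateFrom
    refine ⟨{(n, x, y)}, fun _ => b, ?_⟩
    ext ω
    simp [cylSet, coupledEnv, Uof, fe]
    convert Iff.rfl
    exact decide_eq_decide.mpr Iff.rfl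
  · refine MeasurableSpace.generateFrom_le ?_
    rintro s ⟨E, b, rfl⟩
    have : cylSet f U p E b =
        ⋂ e ∈ E, {ω : Ω | coupledEnv d f U p ω e.1 e.2.1 e.2.2 = b e} := by
      ext ω
      simp [cylSet, coupledEnv, Uof, fe, Set.mem_iInter]
      convert Iff.rfl
      exact decide_eq_decide.mpr Iff.rfl
    rw [this]
    exact MeasurableSet.biInter E.countable_toSet
      (fun e _ => measurableSet_edge f U hUmeas p e.1 e.2.1 e.2.2 (b e))

lemma isPiSystem_cylC (p : ℝ) : IsPiSystem (cylC (Ω := Ω) f U p) := by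
  classical
  rintro s ⟨E₁, b₁, rfl⟩ t ⟨E₂, b₂, rfl⟩ hne
  obtain ⟨ω₀, hω₁, hω₂⟩ := hne
  refine ⟨E₁ ∪ E₂, fun e => if e ∈ E₁ then b₁ e else b₂ e, ?_⟩
  ext ω
  simp only [Set.mem_inter_iff, cylSet, Set.mem_setOf_eq, Finset.mem_union]
  constructor
  · rintro ⟨h1, h2⟩ e he
    by_cases hE : e ∈ E₁
    · rw [if_pos hE]; exact h1 e hE
    · rw [if_neg hE]; exact h2 e (he.resolve_left hE)
  · intro h
    constructor
    · intro e he
      have := h e (Or.inl he)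
      rwa [if_pos he] at this
    · intro e he
      have := h e (Or.inr he)
      by_cases hE : e ∈ E₁
      · rw [if_pos hE] at this
        rw [this, ← hω₁ e hE, hω₂ e he]
      · rwa [if_neg hE] at this

lemma measU (hUmeas : ∀ n x y, Measurable (U n x y))
    (hUunif : ∀ n x y, μ.map (U n x y) = (volume : Measure ℝ).restrict (Set.Icc 0 1))
    (e : EIdx d) {c : ℝ} (hc1 : c ≤ 1) :
    μ {ω | Uof U e ω ≤ c} = ENNReal.ofReal c := by
  have h1 : μ {ω | Uof U e ω ≤ c} = (μ.map (U e.1 e.2.1 e.2.2)) (Set.Iic c) := by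
    rw [Measure.map_apply (hUmeas e.1 e.2.1 e.2.2) measurableSet_Iic]
    rfl
  rw [h1, hUunif, Measure.restrict_apply measurableSet_Iic]
  by_cases hc0 : 0 ≤ c
  · have : Set.Iic c ∩ Set.Icc 0 1 = Set.Icc 0 c := by
      ext u
      simp only [Set.mem_inter_iff, Set.mem_Iic, Set.mem_Icc]
      constructor
      · rintro ⟨h, h0, _⟩; exact ⟨h0, h⟩
      · rintro ⟨h0, h⟩; exact ⟨h, h0, le_trans h hc1⟩
    rw [this, Real.volume_Icc, sub_zero]
  · have : Set.Iic c ∩ Set.Icc 0 1 = ∅ := by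
      ext u
      simp only [Set.mem_inter_iff, Set.mem_Iic, Set.mem_Icc, Set.mem_empty_iff_false,
        iff_false, not_and]
      intro h h0
      exact absurd (le_trans h0 h) hc0
    rw [this, measure_empty, ENNReal.ofReal_eq_zero.mpr (le_of_not_ge hc0)]

lemma measurableSet_pathSet (hUmeas : ∀ n x y, Measurable (U n x y)) (N : ℕ) (q : ℝ)
    (S : Fin (N + 1) → Zd d) : MeasurableSet (pathSet N f U q S) :=
  MeasurableSet.iInter fun i =>
    measurableSet_le (hUmeas _ _ _) measurable_const

lemma measurableSet_pathSet' (hUmeas : ∀ n x y, Measurable (U n x y)) (N : ℕ) (p : ℝ)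
    (S : Fin (N + 1) → Zd d) :
    MeasurableSet[MeasurableSpace.comap (coupledEnv d f U p) inferInstance]
      (pathSet N f U p S) := by
  refine MeasurableSet.iInter fun i => ?_
  have : {ω : Ω | Uof U (pathEdge d N S i) ω ≤ fe d f (pathEdge d N S i) * p} =
      {ω : Ω | coupledEnv d f U p ω (pathEdge d N S i).1 (pathEdge d N S i).2.1
        (pathEdge d N S i).2.2 = true} := by
    ext ω
    simp [coupledEnv, Uof, fe]
  rw [this]
  exact measurableSet_edge f U hUmeas p _ _ _ true

/-- The key measure identity, proved first for cylinder sets and extended by a π-λ argument. -/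
lemma key_measure (hUmeas : ∀ n x y, Measurable (U n x y))
    (hUindep : iIndepFun
      (fun e : ℕ × Zd d × Zd d => U e.1 e.2.1 e.2.2) μ)
    (hUunif : ∀ n x y, μ.map (U n x y) = (volume : Measure ℝ).restrict (Set.Icc 0 1))
    (hf0 : ∀ z, 0 ≤ f z)
    {p' p : ℝ} (hp' : 0 < p') (hle : p' ≤ p) (hpmax : ∀ z, p * f z ≤ 1) (N : ℕ)
    (S : Fin (N + 1) → Zd d) :
    ∀ s : Set Ω, MeasurableSet[MeasurableSpace.comap (coupledEnv d f U p) inferInstance] s →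
      μ (s ∩ pathSet N f U p' S) =
        ENNReal.ofReal ((p' / p) ^ N) * μ (s ∩ pathSet N f U p S) := by
  classical
  have hp : 0 < p := lt_of_lt_of_le hp' hle
  have hm : MeasurableSpace.comap (coupledEnv d f U p) inferInstance ≤ ‹MeasurableSpace Ω› :=
    (measurable_coupledEnv f U hUmeas p).comap_le
  -- basic case
  have hbasic : ∀ E : Finset (EIdx d), ∀ b : EIdx d → Bool,
      μ (cylSet f U p E b ∩ pathSet N f U p' S) =
        ENNReal.ofReal ((p' / p) ^ N) * μ (cylSet f U p E b ∩ pathSet N f U p S) := by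
    intro E b
    set PE : Finset (EIdx d) := Finset.image (pathEdge d N S) Finset.univ with hPEdef
    set V : ℝ → EIdx d → Set Ω := fun q e =>
      (if e ∈ E then {ω | decide (Uof U e ω ≤ fe d f e * p) = b e} else Set.univ) ∩
      (if e ∈ PE then {ω | Uof U e ω ≤ fe d f e * q} else Set.univ) with hVdef
    have hVmeas : ∀ q e, MeasurableSet[MeasurableSpace.comap (Uof U e) inferInstance] (V q e) := by
      intro q e
      refine ⟨(if e ∈ E then {u : ℝ | decide (u ≤ fe d f e * p) = b e} else Set.univ) ∩
        (if e ∈ PE then Set.Iic (fe d f e * q) else Set.univ), ?_, ?_⟩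
      · refine MeasurableSet.inter ?_ ?_
        · split_ifs
          · exact measDec _ _
          · exact MeasurableSet.univ
        · split_ifs
          · exact measurableSet_Iic
          · exact MeasurableSet.univ
      · simp only [hVdef]
        split_ifs <;> rfl
    have hsplit : ∀ q, cylSet f U p E b ∩ pathSet N f U q S = ⋂ e ∈ (E ∪ PE), V q e := by
      intro q
      ext ω
      simp only [Set.mem_inter_iff, Set.mem_iInter, cylSet, pathSet, Set.mem_setOf_eq,
        Finset.mem_union, hVdef]
      constructor
      · rintro ⟨h1, h2⟩ e he
        constructor
        · split_ifs with hE
          · exact h1 e hE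
          · trivial
        · split_ifs with hPE
          · rcases Finset.mem_image.mp hPE with ⟨i, _, rfl⟩
            exact h2 i
          · trivial
      · intro h
        constructor
        · intro e he
          have := (h e (Or.inl he)).1
          rwa [if_pos he] at this
        · intro i
          have hPE : pathEdge d N S i ∈ PE := Finset.mem_image.mpr ⟨i, Finset.mem_univ i, rfl⟩
          have := (h _ (Or.inr hPE)).2
          rwa [if_pos hPE] at this
    have hprod : ∀ q, μ (⋂ e ∈ (E ∪ PE), V q e) = ∏ e ∈ E ∪ PE, μ (V q e) := by
      intro q
      exact hUindep.meas_biInter (fun e _ => hVmeas q e)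
    have hfactor : ∀ e ∈ E ∪ PE,
        μ (V p' e) = (if e ∈ PE then ENNReal.ofReal (p' / p) else 1) * μ (V p e) := by
      intro e _
      by_cases hPE : e ∈ PE
      · rw [if_pos hPE]
        have hc0 : 0 ≤ fe d f e := hf0 _
        have hcp1 : fe d f e * p ≤ 1 := by
          have := hpmax (e.2.2 - e.2.1); rw [mul_comm] at this; exact this
        have hcple : fe d f e * p' ≤ fe d f e * p := mul_le_mul_of_nonneg_left hle hc0
        have hofReal : ENNReal.ofReal (fe d f e * p') =
            ENNReal.ofReal (p' / p) * ENNReal.ofReal (fe d f e * p) := by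
          rw [← ENNReal.ofReal_mul (div_nonneg hp'.le hp.le)]
          congr 1
          field_simp
        by_cases hE : e ∈ E
        · cases hb : b e
          · have h1 : V p' e = ∅ := by
              simp only [hVdef]
              ext ω
              simp only [if_pos hE, if_pos hPE, hb, Set.mem_inter_iff, Set.mem_setOf_eq,
                Set.mem_empty_iff_false, iff_false, not_and, decide_eq_false_iff_not]
              intro hndec hle'
              exact hndec (le_trans hle' hcple)
            have h2 : V p e = ∅ := by
              simp only [hVdef]
              ext ω
              simp only [if_pos hE, if_pos hPE, hb, Set.mem_inter_iff, Set.mem_setOf_eq,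
                Set.mem_empty_iff_false, iff_false, not_and, decide_eq_false_iff_not]
              intro hndec hle'
              exact hndec hle'
            rw [h1, h2]
            simp
          · have h1 : V p' e = {ω | Uof U e ω ≤ fe d f e * p'} := by
              simp only [hVdef]
              ext ω
              simp only [if_pos hE, if_pos hPE, hb, Set.mem_inter_iff, Set.mem_setOf_eq,
                decide_eq_true_eq]
              exact ⟨fun h => h.2, fun h => ⟨le_trans h hcple, h⟩⟩
            have h2 : V p e = {ω | Uof U e ω ≤ fe d f e * p} := by
              simp only [hVdef]
              ext ω
              simp only [if_pos hE, if_pos hPE, hb, Set.mem_inter_iff, Set.mem_setOf_eq,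
                decide_eq_true_eq]
              exact ⟨fun h => h.2, fun h => ⟨h, h⟩⟩
            rw [h1, h2, measU μ U hUmeas hUunif e (le_trans hcple hcp1),
              measU μ U hUmeas hUunif e hcp1, hofReal]
        · have h1 : V p' e = {ω | Uof U e ω ≤ fe d f e * p'} := by
            simp only [hVdef]
            ext ω
            simp [if_neg hE, if_pos hPE]
          have h2 : V p e = {ω | Uof U e ω ≤ fe d f e * p} := by
            simp only [hVdef]
            ext ω
            simp [if_neg hE, if_pos hPE]
          rw [h1, h2, measU μ U hUmeas hUunif e (le_trans hcple hcp1),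
            measU μ U hUmeas hUunif e hcp1, hofReal]
      · rw [if_neg hPE, one_mul]
        have : V p' e = V p e := by
          simp only [hVdef]
          simp [if_neg hPE]
        rw [this]
    have hPEcard : PE.card = N := by
      rw [hPEdef, Finset.card_image_of_injective _ (pathEdge_injective d N S),
        Finset.card_univ, Fintype.card_fin]
    calc μ (cylSet f U p E b ∩ pathSet N f U p' S)
        = ∏ e ∈ E ∪ PE, μ (V p' e) := by rw [hsplit, hprod]
      _ = ∏ e ∈ E ∪ PE, ((if e ∈ PE then ENNReal.ofReal (p' / p) else 1) * μ (V p e)) :=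
          Finset.prod_congr rfl hfactor
      _ = (∏ e ∈ E ∪ PE, (if e ∈ PE then ENNReal.ofReal (p' / p) else 1)) *
            ∏ e ∈ E ∪ PE, μ (V p e) := Finset.prod_mul_distrib
      _ = ENNReal.ofReal ((p' / p) ^ N) * μ (cylSet f U p E b ∩ pathSet N f U p S) := by
          rw [hsplit, hprod]
          congr 1
          rw [← Finset.prod_filter]
          have : (E ∪ PE).filter (· ∈ PE) = PE := by
            ext e
            simp only [Finset.mem_filter, Finset.mem_union]
            tauto
          rw [this, Finset.prod_const, hPEcard, ENNReal.ofReal_pow (div_nonneg hp'.le hp.le)]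
  -- π-λ extension
  intro s hs
  have hA'm : MeasurableSet (pathSet N f U p' S) := measurableSet_pathSet f U hUmeas N p' S
  have hAm : MeasurableSet (pathSet N f U p S) := measurableSet_pathSet f U hUmeas N p S
  refine MeasurableSpace.induction_on_inter
    (m := MeasurableSpace.comap (coupledEnv d f U p) inferInstance)
    (C := fun s _ => μ (s ∩ pathSet N f U p' S) =
      ENNReal.ofReal ((p' / p) ^ N) * μ (s ∩ pathSet N f U p S))
    (comap_eq_generateFrom f U hUmeas p) (isPiSystem_cylC f U p) (by simp) ?_ ?_ ?_ s hs
  · rintro t ⟨E, b, rfl⟩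
    exact hbasic E b
  · intro t htm hQ
    have htm0 : MeasurableSet t := hm _ htm
    have huniv : μ (pathSet N f U p' S) =
        ENNReal.ofReal ((p' / p) ^ N) * μ (pathSet N f U p S) := by
      have h := hbasic ∅ (fun _ => true)
      have he : cylSet f U p (∅ : Finset (EIdx d)) (fun _ => true) = Set.univ := by
        ext ω; simp [cylSet]
      rw [he, Set.univ_inter, Set.univ_inter] at h
      exact h
    have hdiff : ∀ q (hAq : MeasurableSet (pathSet N f U q S)),
        μ (tᶜ ∩ pathSet N f U q S) = μ (pathSet N f U q S) - μ (t ∩ pathSet N f U q S) := by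
      intro q hAq
      have hset : tᶜ ∩ pathSet N f U q S = pathSet N f U q S \ (t ∩ pathSet N f U q S) := by
        ext ω
        simp only [Set.mem_inter_iff, Set.mem_compl_iff, Set.mem_diff]
        tauto
      rw [hset, measure_diff Set.inter_subset_right
        ((htm0.inter hAq).nullMeasurableSet) (measure_ne_top μ _)]
    rw [hdiff p' hA'm, hdiff p hAm, hQ, huniv,
      ENNReal.mul_sub (fun _ _ => ENNReal.ofReal_ne_top)]
  · intro g hdisj hgm hQ
    rw [Set.iUnion_inter, Set.iUnion_inter,
      measure_iUnion (fun i j hij => ((hdisj hij).mono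
        Set.inter_subset_left Set.inter_subset_left))
        (fun i => (hm _ (hgm i)).inter hA'm),
      measure_iUnion (fun i j hij => ((hdisj hij).mono
        Set.inter_subset_left Set.inter_subset_left))
        (fun i => (hm _ (hgm i)).inter hAm), ← ENNReal.tsum_mul_left]
    exact tsum_congr fun n => hQ n

lemma pathCount_eq (hfin : (Function.support f).Finite)
    {q : ℝ} (hq : 0 < q) (N : ℕ) (ω : Ω)
    (hgood : ∀ e : EIdx d, f (e.2.2 - e.2.1) ≤ 0 → 0 < U e.1 e.2.1 e.2.2 ω) :
    (pathCount d N (coupledEnv d f U q ω) : ℝ) =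
      ∑ S ∈ PF d N f hfin, Set.indicator (pathSet N f U q S) (fun _ => (1 : ℝ)) ω := by
  classical
  set T : Set (Fin (N + 1) → Zd d) := {S | S 0 = 0 ∧
    ∀ i : Fin N, coupledEnv d f U q ω i (S i.castSucc) (S i.succ) = true} with hTdef
  have hmem : ∀ S ∈ T, S ∈ PF d N f hfin := by
    rintro S ⟨h0, hop⟩
    refine mem_PF hfin h0 fun i => ?_
    have hU := hop i
    simp only [coupledEnv, decide_eq_true_eq] at hU
    by_contra h
    rw [Function.mem_support, not_not] at h
    have h2 := hgood ((i : ℕ), S i.castSucc, S i.succ) (le_of_eq h)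
    simp only at h2
    rw [h, zero_mul] at hU
    linarith
  have hTfin : T = ↑((PF d N f hfin).filter (· ∈ T)) := by
    ext S
    simp only [Finset.coe_filter, Set.mem_setOf_eq]
    exact ⟨fun h => ⟨hmem S h, h⟩, fun h => h.2⟩
  have h1 : pathCount d N (coupledEnv d f U q ω) = ((PF d N f hfin).filter (· ∈ T)).card := by
    have h2 : pathCount d N (coupledEnv d f U q ω) = Nat.card T := rfl
    rw [h2, Nat.card_coe_set_eq]
    conv_lhs => rw [hTfin]
    rw [Set.ncard_coe_finset]
  rw [h1, Finset.card_filter]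
  push_cast
  refine Finset.sum_congr rfl fun S hS => ?_
  rw [Set.indicator_apply]
  have hiff : S ∈ T ↔ ω ∈ pathSet N f U q S := by
    constructor
    · rintro ⟨_, hop⟩
      refine Set.mem_iInter.mpr fun i => ?_
      have := hop i
      simpa [coupledEnv, Uof, fe, pathEdge] using this
    · intro h
      refine ⟨PF_zero hfin hS, fun i => ?_⟩
      have := Set.mem_iInter.mp h i
      simpa [coupledEnv, Uof, fe, pathEdge] using this
  exact if_congr hiff rfl rfl

lemma good_ae (hUmeas : ∀ n x y, Measurable (U n x y))
    (hUunif : ∀ n x y, μ.map (U n x y) = (volume : Measure ℝ).restrict (Set.Icc 0 1)) :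
    ∀ᵐ ω ∂μ, ∀ e : EIdx d, f (e.2.2 - e.2.1) ≤ 0 → 0 < U e.1 e.2.1 e.2.2 ω := by
  rw [ae_all_iff]
  intro e
  by_cases hfe : f (e.2.2 - e.2.1) ≤ 0
  · have h0 : μ {ω | Uof U e ω ≤ 0} = 0 := by
      rw [measU μ U hUmeas hUunif e (by norm_num : (0 : ℝ) ≤ 1)]
      simp
    rw [ae_iff]
    refine measure_mono_null ?_ h0
    intro ω h
    simp only [Set.mem_setOf_eq, Classical.not_imp, not_lt] at h
    exact h.2
  · filter_upwards with ω h
    exact absurd h hfe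

end Measure

end Stmt5Aux

/-- In the monotone coupling via uniforms, for `p' ≤ p` (with `p' > 0`),
`E[W_N(p') ∣ 𝓕_p] = W_N(p)`. -/
theorem stmt5 {Ω : Type} [MeasurableSpace Ω] (μ : Measure Ω) [IsProbabilityMeasure μ]
    (d : ℕ) (f : Zd d → ℝ) (hf0 : ∀ z, 0 ≤ f z)
    (hfin : (Function.support f).Finite) (hsum : ∑ᶠ z, f z = 1)
    (U : ℕ → Zd d → Zd d → Ω → ℝ)
    (hUmeas : ∀ n x y, Measurable (U n x y))
    (hUindep : iIndepFun
      (fun e : ℕ × Zd d × Zd d => U e.1 e.2.1 e.2.2) μ)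
    (hUunif : ∀ n x y, μ.map (U n x y) = (volume : Measure ℝ).restrict (Set.Icc 0 1))
    (p' p : ℝ) (hp' : 0 < p') (hle : p' ≤ p) (hpmax : ∀ z, p * f z ≤ 1) (N : ℕ) :
    μ[fun ω => W d p' N (coupledEnv d f U p' ω)|
        MeasurableSpace.comap (coupledEnv d f U p) inferInstance]
      =ᵐ[μ] fun ω => W d p N (coupledEnv d f U p ω) := by
  classical
  have hp : 0 < p := lt_of_lt_of_le hp' hle
  have hm : MeasurableSpace.comap (coupledEnv d f U p) inferInstance ≤
      (inferInstance : MeasurableSpace Ω) :=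
    (Stmt5Aux.measurable_coupledEnv f U hUmeas p).comap_le
  haveI : IsFiniteMeasure (μ.trim hm) :=
    ⟨by rw [trim_measurableSet_eq hm MeasurableSet.univ]; exact measure_lt_top μ _⟩
  have hgood := Stmt5Aux.good_ae μ f U hUmeas hUunif
  have hind_int : ∀ (q : ℝ) (S : Fin (N + 1) → Zd d),
      Integrable (Set.indicator (Stmt5Aux.pathSet N f U q S) (fun _ => (1 : ℝ))) μ :=
    fun q S => (integrable_const 1).indicator (Stmt5Aux.measurableSet_pathSet f U hUmeas N q S)
  set F' : Ω → ℝ := fun ω => (∑ S ∈ Stmt5Aux.PF d N f hfin,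
      Set.indicator (Stmt5Aux.pathSet N f U p' S) (fun _ => (1 : ℝ)) ω) / p' ^ N with hF'def
  set G : Ω → ℝ := fun ω => (∑ S ∈ Stmt5Aux.PF d N f hfin,
      Set.indicator (Stmt5Aux.pathSet N f U p S) (fun _ => (1 : ℝ)) ω) / p ^ N with hGdef
  have hAEp' : (fun ω => W d p' N (coupledEnv d f U p' ω)) =ᵐ[μ] F' := by
    filter_upwards [hgood] with ω hω
    simp only [hF'def, W]
    rw [Stmt5Aux.pathCount_eq f U hfin hp' N ω hω]
  have hAEp : (fun ω => W d p N (coupledEnv d f U p ω)) =ᵐ[μ] G := by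
    filter_upwards [hgood] with ω hω
    simp only [hGdef, W]
    rw [Stmt5Aux.pathCount_eq f U hfin hp N ω hω]
  have hF'int : Integrable F' μ :=
    (integrable_finset_sum _ fun S _ => hind_int p' S).div_const _
  have hGint : Integrable G μ :=
    (integrable_finset_sum _ fun S _ => hind_int p S).div_const _
  have hGsm : StronglyMeasurable[MeasurableSpace.comap (coupledEnv d f U p) inferInstance] G := by
    have hsum : StronglyMeasurable[MeasurableSpace.comap (coupledEnv d f U p) inferInstance]
        (fun ω => ∑ S ∈ Stmt5Aux.PF d N f hfin,
          Set.indicator (Stmt5Aux.pathSet N f U p S) (fun _ => (1 : ℝ)) ω) :=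
      Finset.stronglyMeasurable_fun_sum _ fun S _ =>
        stronglyMeasurable_const.indicator (Stmt5Aux.measurableSet_pathSet' f U hUmeas N p S)
    have hGeq : G = fun ω => (∑ S ∈ Stmt5Aux.PF d N f hfin,
        Set.indicator (Stmt5Aux.pathSet N f U p S) (fun _ => (1 : ℝ)) ω) * (p ^ N)⁻¹ := by
      funext ω; rw [hGdef]; simp only; rw [div_eq_mul_inv]
    rw [hGeq]
    exact hsum.mul_const _
  have hset : ∀ s : Set Ω,
      MeasurableSet[MeasurableSpace.comap (coupledEnv d f U p) inferInstance] s → μ s < ⊤ →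
      ∫ ω in s, G ω ∂μ = ∫ ω in s, F' ω ∂μ := by
    intro s hsm _
    have key := Stmt5Aux.key_measure μ f U hUmeas hUindep hUunif hf0 hp' hle hpmax N
    have hint : ∀ (q : ℝ) (S : Fin (N + 1) → Zd d),
        ∫ ω in s, Set.indicator (Stmt5Aux.pathSet N f U q S) (fun _ => (1 : ℝ)) ω ∂μ
          = (μ (s ∩ Stmt5Aux.pathSet N f U q S)).toReal := by
      intro q S
      rw [setIntegral_indicator (Stmt5Aux.measurableSet_pathSet f U hUmeas N q S),
        setIntegral_const, smul_eq_mul, mul_one]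
      rfl
    rw [hGdef, hF'def]
    simp only
    rw [integral_div, integral_div,
      integral_finset_sum _ (fun S _ => (hind_int p S).integrableOn),
      integral_finset_sum _ (fun S _ => (hind_int p' S).integrableOn)]
    have hcong : ∀ S ∈ Stmt5Aux.PF d N f hfin,
        ∫ ω in s, Set.indicator (Stmt5Aux.pathSet N f U p' S) (fun _ => (1 : ℝ)) ω ∂μ =
          (p' / p) ^ N * (μ (s ∩ Stmt5Aux.pathSet N f U p S)).toReal := by
      intro S _
      rw [hint p' S, key S s hsm, ENNReal.toReal_mul,
        ENNReal.toReal_ofReal (pow_nonneg (div_nonneg hp'.le hp.le) N)]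
    rw [Finset.sum_congr rfl hcong, Finset.sum_congr rfl fun S _ => hint p S, ← Finset.mul_sum,
      div_pow]
    field_simp
  have h3 : G =ᵐ[μ] μ[F'|MeasurableSpace.comap (coupledEnv d f U p) inferInstance] :=
    ae_eq_condExp_of_forall_setIntegral_eq hm hF'int (fun s _ _ => hGint.integrableOn)
      hset ⟨G, hGsm, Filter.EventuallyEq.rfl⟩
  calc μ[fun ω => W d p' N (coupledEnv d f U p' ω)|MeasurableSpace.comap (coupledEnv d f U p) inferInstance]
      =ᵐ[μ] μ[F'|MeasurableSpace.comap (coupledEnv d f U p) inferInstance] := condExp_congr_ae hAEp'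
    _ =ᵐ[μ] G := h3.symm
    _ =ᵐ[μ] (fun ω => W d p N (coupledEnv d f U p ω)) := hAEp.symm
end
end

section
/- Under the monotone coupling of oriented percolation environments at different parameters, the map $p \mapsto \mathbb{P}(W_\infty(p) > 0)$ is non-decreasing on $(0, p_{\max}]$. -/
open MeasureTheory ProbabilityTheory Filter

noncomputable section

namespace S6
open scoped ENNReal

variable {Ω : Type} [MeasurableSpace Ω]
variable (d : ℕ) (f : Zd d → ℝ) (U : ℕ → Zd d → Zd d → Ω → ℝ)

/-- An edge of the oriented graph. -/
abbrev EdgeT (d : ℕ) := ℕ × Zd d × Zd d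

/-- The uniform variable attached to an edge. -/
def evU (e : EdgeT d) : Ω → ℝ := fun ω => U e.1 e.2.1 e.2.2 ω

/-- The spatial increment of an edge. -/
def eΔ (e : EdgeT d) : Zd d := e.2.2 - e.2.1

/-- The `i`-th edge of a path. -/
def pathEdge {n : ℕ} (S : Fin (n + 1) → Zd d) (i : Fin n) : EdgeT d :=
  ((i : ℕ), S i.castSucc, S i.succ)

lemma pathEdge_injective {n : ℕ} (S : Fin (n + 1) → Zd d) :
    Function.Injective (pathEdge d S) := fun i j h =>
  Fin.ext (congrArg Prod.fst h)

/-- Paths started at the origin with steps in the support of `f`. -/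
def pathsSet (n : ℕ) : Set (Fin (n + 1) → Zd d) :=
  {S | S 0 = 0 ∧ ∀ i : Fin n, f (S i.succ - S i.castSucc) ≠ 0}

lemma pathsSet_finite (hfin : (Function.support f).Finite) (n : ℕ) :
    (pathsSet d f n).Finite := by
  have hinj : Set.InjOn (fun (S : Fin (n + 1) → Zd d) (i : Fin n) =>
      S i.succ - S i.castSucc) (pathsSet d f n) := by
    intro S hS T hT hST
    funext j
    induction j using Fin.induction with
    | zero => rw [hS.1, hT.1]
    | succ i ih =>
        have h1 : S i.succ - S i.castSucc = T i.succ - T i.castSucc := congrFun hST i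
        have h2 : S i.succ = S i.succ - S i.castSucc + S i.castSucc := (sub_add_cancel _ _).symm
        rw [h2, h1, ih, sub_add_cancel]
  apply Set.Finite.of_finite_image ?_ hinj
  apply Set.Finite.subset (Set.Finite.pi (fun _ : Fin n => hfin))
  rintro g ⟨S, hS, rfl⟩
  intro i _
  exact hS.2 i

variable (hfin : (Function.support f).Finite)

/-- The finite set of supported paths of length `n`. -/
def pathsF (n : ℕ) : Finset (Fin (n + 1) → Zd d) := (pathsSet_finite d f hfin n).toFinset

lemma mem_pathsF {n : ℕ} {S : Fin (n + 1) → Zd d} :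
    S ∈ pathsF d f hfin n ↔ S 0 = 0 ∧ ∀ i : Fin n, f (S i.succ - S i.castSucc) ≠ 0 :=
  Set.Finite.mem_toFinset _

/-- The edges of a path, as a finite set. -/
def pathEdges {n : ℕ} (S : Fin (n + 1) → Zd d) : Finset (EdgeT d) :=
  Finset.image (pathEdge d S) Finset.univ

/-- All edges used by supported paths of length `N`. -/
def edgeSet (N : ℕ) : Finset (EdgeT d) :=
  (pathsF d f hfin N).biUnion (fun S => pathEdges d S)

lemma layer_lt_of_mem_edgeSet {N : ℕ} {e : EdgeT d} (he : e ∈ edgeSet d f hfin N) :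
    e.1 < N := by
  obtain ⟨S, _, hS⟩ := Finset.mem_biUnion.1 he
  obtain ⟨i, _, rfl⟩ := Finset.mem_image.1 hS
  exact i.isLt

lemma trunc_mem_pathsF {N n : ℕ} (hn : N ≤ n) {S : Fin (n + 1) → Zd d}
    (hS : S ∈ pathsF d f hfin n) :
    (fun j : Fin (N + 1) => S (Fin.castLE (Nat.succ_le_succ hn) j)) ∈ pathsF d f hfin N := by
  rw [mem_pathsF] at hS ⊢
  refine ⟨?_, ?_⟩
  · have h0 : Fin.castLE (Nat.succ_le_succ hn) (0 : Fin (N + 1)) = 0 := by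
      apply Fin.ext; simp
    rw [h0]; exact hS.1
  · intro j
    have h1 : Fin.castLE (Nat.succ_le_succ hn) j.succ = (Fin.castLE hn j).succ := by
      apply Fin.ext; simp
    have h2 : Fin.castLE (Nat.succ_le_succ hn) j.castSucc = (Fin.castLE hn j).castSucc := by
      apply Fin.ext; simp
    rw [h1, h2]
    exact hS.2 _

lemma pathEdge_mem_edgeSet {N n : ℕ} (hn : N ≤ n) {S : Fin (n + 1) → Zd d}
    (hS : S ∈ pathsF d f hfin n) (i : Fin n) (hi : (i : ℕ) < N) :
    pathEdge d S i ∈ edgeSet d f hfin N := by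
  apply Finset.mem_biUnion.2
  refine ⟨_, trunc_mem_pathsF d f hfin hn hS, ?_⟩
  apply Finset.mem_image.2
  refine ⟨⟨(i : ℕ), hi⟩, Finset.mem_univ _, ?_⟩
  unfold pathEdge
  refine congrArg₂ Prod.mk rfl (congrArg₂ Prod.mk ?_ ?_) <;>
    exact congrArg S (by apply Fin.ext; simp)

/-- The event that path `S` is fully open at parameter `q`. -/
def openEv (q : ℝ) {n : ℕ} (S : Fin (n + 1) → Zd d) : Set Ω :=
  ⋂ i : Fin n, evU d U (pathEdge d S i) ⁻¹' Set.Iic (f (eΔ d (pathEdge d S i)) * q)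

lemma mem_openEv {q : ℝ} {n : ℕ} {S : Fin (n + 1) → Zd d} {ω : Ω} :
    ω ∈ openEv d f U q S ↔
      ∀ i : Fin n, evU d U (pathEdge d S i) ω ≤ f (eΔ d (pathEdge d S i)) * q := by
  simp [openEv]

/-- The indicator of openness of edge `i` of path `S`. -/
def ind (q : ℝ) {n : ℕ} (S : Fin (n + 1) → Zd d) (i : Fin n) (ω : Ω) : ℝ :=
  if evU d U (pathEdge d S i) ω ≤ f (eΔ d (pathEdge d S i)) * q then 1 else 0

/-- Measurable version of the renormalized partition function. -/
def What (q : ℝ) (n : ℕ) (ω : Ω) : ℝ :=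
  (∑ S ∈ pathsF d f hfin n, ∏ i : Fin n, ind d f U q S i ω) / q ^ n

variable {μ : Measure Ω}

lemma measurable_ind (hUmeas : ∀ n x y, Measurable (U n x y)) (q : ℝ) {n : ℕ}
    (S : Fin (n + 1) → Zd d) (i : Fin n) : Measurable (ind d f U q S i) :=
  Measurable.ite (measurableSet_le (hUmeas _ _ _) measurable_const)
    measurable_const measurable_const

lemma measurable_What (hUmeas : ∀ n x y, Measurable (U n x y)) (q : ℝ) (n : ℕ) :
    Measurable (What d f U hfin q n) :=
  Measurable.div_const (Finset.measurable_sum _ (fun S _ =>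
    Finset.measurable_prod _ (fun i _ => measurable_ind d f U hUmeas q S i))) _

lemma measurableSet_openEv (hUmeas : ∀ n x y, Measurable (U n x y)) (q : ℝ) {n : ℕ}
    (S : Fin (n + 1) → Zd d) : MeasurableSet (openEv d f U q S) :=
  MeasurableSet.iInter (fun i => (hUmeas _ _ _) measurableSet_Iic)

/-- Factorization of the measure of an intersection of single-edge events. -/
lemma meas_inter_edges
    (hUindep : iIndepFun
      (fun e : ℕ × Zd d × Zd d => U e.1 e.2.1 e.2.2) μ)
    (T : Finset (EdgeT d)) (B : EdgeT d → Set ℝ) (hB : ∀ e, MeasurableSet (B e)) :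
    μ (⋂ e ∈ T, evU d U e ⁻¹' B e) = ∏ e ∈ T, μ (evU d U e ⁻¹' B e) := by
  exact hUindep.meas_biInter (fun e _ => ⟨B e, hB e, rfl⟩)

lemma meas_Iic (hUmeas : ∀ n x y, Measurable (U n x y))
    (hUunif : ∀ n x y, μ.map (U n x y) = (volume : Measure ℝ).restrict (Set.Icc 0 1))
    (e : EdgeT d) {c : ℝ} (h0 : 0 ≤ c) (h1 : c ≤ 1) :
    μ (evU d U e ⁻¹' Set.Iic c) = ENNReal.ofReal c := by
  have hm := hUmeas e.1 e.2.1 e.2.2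
  have : evU d U e ⁻¹' Set.Iic c = (U e.1 e.2.1 e.2.2) ⁻¹' Set.Iic c := rfl
  rw [this, ← Measure.map_apply hm measurableSet_Iic, hUunif,
    Measure.restrict_apply measurableSet_Iic]
  have hint : Set.Iic c ∩ Set.Icc 0 1 = Set.Icc 0 c := by
    ext x
    simp only [Set.mem_inter_iff, Set.mem_Iic, Set.mem_Icc]
    constructor
    · rintro ⟨hx, hx0, _⟩; exact ⟨hx0, hx⟩
    · rintro ⟨hx0, hx⟩; exact ⟨hx, hx0, hx.trans h1⟩
  rw [hint, Real.volume_Icc, sub_zero]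


/-- The constraint set of an atom at edge `e`. -/
def atomB (p : ℝ) (κ : EdgeT d → Bool) (e : EdgeT d) : Set ℝ :=
  if κ e then Set.Iic (f (eΔ d e) * p) else (Set.Iic (f (eΔ d e) * p))ᶜ

lemma measurableSet_atomB (p : ℝ) (κ : EdgeT d → Bool) (e : EdgeT d) :
    MeasurableSet (atomB d f p κ e) := by
  unfold atomB; split_ifs
  · exact measurableSet_Iic
  · exact measurableSet_Iic.compl

/-- The atom of the `N`-cylinder σ-algebra specified by `κ`. -/
def atom (p : ℝ) (N : ℕ) (κ : EdgeT d → Bool) : Set Ω :=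
  ⋂ e ∈ edgeSet d f hfin N, evU d U e ⁻¹' atomB d f p κ e

lemma mem_atom {p : ℝ} {N : ℕ} {κ : EdgeT d → Bool} {ω : Ω} :
    ω ∈ atom d f U hfin p N κ ↔
      ∀ e ∈ edgeSet d f hfin N, evU d U e ω ∈ atomB d f p κ e := by
  simp [atom]

lemma measurableSet_atom (hUmeas : ∀ n x y, Measurable (U n x y)) (p : ℝ) (N : ℕ)
    (κ : EdgeT d → Bool) : MeasurableSet (atom d f U hfin p N κ) := by
  apply Finset.measurableSet_biInter
  exact fun e _ => (hUmeas _ _ _) (measurableSet_atomB d f p κ e)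

/-- Key evaluation: the measure of an atom intersected with a path-openness event. -/
lemma eval
    (hUmeas : ∀ n x y, Measurable (U n x y))
    (hUindep : iIndepFun
      (fun e : ℕ × Zd d × Zd d => U e.1 e.2.1 e.2.2) μ)
    (hUunif : ∀ n x y, μ.map (U n x y) = (volume : Measure ℝ).restrict (Set.Icc 0 1))
    (hf0 : ∀ z, 0 ≤ f z)
    {p q : ℝ} (hq : 0 < q) (hqp : q ≤ p) (hp1 : ∀ z, p * f z ≤ 1)
    {N n : ℕ} (hNn : N ≤ n) (κ : EdgeT d → Bool)
    {S : Fin (n + 1) → Zd d} (hS : S ∈ pathsF d f hfin n) :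
    μ (atom d f U hfin p N κ ∩ openEv d f U q S) =
      (∏ e ∈ edgeSet d f hfin N \ pathEdges d S, μ (evU d U e ⁻¹' atomB d f p κ e)) *
      ∏ i : Fin n,
        (if (i : ℕ) < N then
          (if κ (pathEdge d S i) then ENNReal.ofReal (f (eΔ d (pathEdge d S i)) * q) else 0)
        else ENNReal.ofReal (f (eΔ d (pathEdge d S i)) * q)) := by
  classical
  set E₀ := edgeSet d f hfin N with hE₀
  set PE := pathEdges d S with hPE
  set C : EdgeT d → Set ℝ := fun e =>
    (if e ∈ E₀ then atomB d f p κ e else Set.univ) ∩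
    (if e ∈ PE then Set.Iic (f (eΔ d e) * q) else Set.univ) with hC
  have hCmeas : ∀ e, MeasurableSet (C e) := by
    intro e
    apply MeasurableSet.inter <;> split_ifs
    · exact measurableSet_atomB d f p κ e
    · exact MeasurableSet.univ
    · exact measurableSet_Iic
    · exact MeasurableSet.univ
  have hset : atom d f U hfin p N κ ∩ openEv d f U q S
      = ⋂ e ∈ E₀ ∪ PE, evU d U e ⁻¹' C e := by
    ext ω
    constructor
    · rintro ⟨ha, ho⟩
      apply Set.mem_iInter₂.2
      intro e _
      refine Set.mem_preimage.2 ⟨?_, ?_⟩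
      · apply (Set.mem_ite_univ_right _ _ _).2
        intro he
        exact (mem_atom d f U hfin).1 ha e he
      · apply (Set.mem_ite_univ_right _ _ _).2
        intro he
        obtain ⟨i, _, rfl⟩ := Finset.mem_image.1 he
        exact (mem_openEv d f U).1 ho i
    · intro h
      constructor
      · apply (mem_atom d f U hfin).2
        intro e he
        have hh := Set.mem_iInter₂.1 h e (Finset.mem_union_left _ he)
        exact (Set.mem_ite_univ_right _ _ _).1 (Set.mem_preimage.1 hh).1 he
      · apply (mem_openEv d f U).2
        intro i
        have hmem : pathEdge d S i ∈ PE := Finset.mem_image_of_mem _ (Finset.mem_univ i)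
        have hh := Set.mem_iInter₂.1 h _ (Finset.mem_union_right _ hmem)
        have := (Set.mem_ite_univ_right _ _ _).1 (Set.mem_preimage.1 hh).2 hmem
        exact this
  rw [hset, meas_inter_edges d U hUindep _ C hCmeas]
  have hsplit : E₀ ∪ PE = (E₀ \ PE) ∪ PE := (Finset.sdiff_union_self_eq_union).symm
  rw [hsplit, Finset.prod_union Finset.sdiff_disjoint]
  congr 1
  · apply Finset.prod_congr rfl
    intro e he
    rw [Finset.mem_sdiff] at he
    have : C e = atomB d f p κ e := by
      rw [hC]; simp only [if_pos he.1, if_neg he.2, Set.inter_univ]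
    rw [this]
  · rw [hPE, pathEdges, Finset.prod_image
      (fun i _ j _ h => pathEdge_injective d S h)]
    apply Finset.prod_congr rfl
    intro i _
    have hmem : pathEdge d S i ∈ PE := Finset.mem_image_of_mem _ (Finset.mem_univ i)
    have hfq0 : 0 ≤ f (eΔ d (pathEdge d S i)) * q :=
      mul_nonneg (hf0 _) hq.le
    have hfqp : f (eΔ d (pathEdge d S i)) * q ≤ f (eΔ d (pathEdge d S i)) * p :=
      mul_le_mul_of_nonneg_left hqp (hf0 _)
    have hfq1 : f (eΔ d (pathEdge d S i)) * q ≤ 1 := by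
      refine hfqp.trans ?_
      rw [mul_comm]; exact hp1 _
    by_cases hi : (i : ℕ) < N
    · have he : pathEdge d S i ∈ E₀ := pathEdge_mem_edgeSet d f hfin hNn hS i hi
      rw [if_pos hi]
      cases hk : κ (pathEdge d S i) with
      | true =>
          have : C (pathEdge d S i) = Set.Iic (f (eΔ d (pathEdge d S i)) * q) := by
            rw [hC]
            simp only [if_pos he, if_pos hmem, atomB, hk, if_pos]
            rw [Set.Iic_inter_Iic, min_eq_right hfqp]
          rw [this, if_pos rfl, meas_Iic d U hUmeas hUunif _ hfq0 hfq1]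
      | false =>
          have : C (pathEdge d S i) = ∅ := by
            rw [hC]
            simp only [if_pos he, if_pos hmem, atomB, hk]
            rw [if_neg (by simp)]
            apply Set.eq_empty_iff_forall_notMem.2
            rintro x ⟨hc, hle⟩
            exact hc (hle.trans hfqp)
          rw [this, if_neg (by simp [hk]), Set.preimage_empty, measure_empty]
    · have he : pathEdge d S i ∉ E₀ := by
        intro h
        exact hi (layer_lt_of_mem_edgeSet d f hfin h)
      have : C (pathEdge d S i) = Set.Iic (f (eΔ d (pathEdge d S i)) * q) := by
        rw [hC]; simp only [if_neg he, if_pos hmem, Set.univ_inter]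
      rw [this, if_neg hi, meas_Iic d U hUmeas hUunif _ hfq0 hfq1]


/-- The set-integral of the renormalized partition function as a sum over paths. -/
lemma lint_What (hUmeas : ∀ n x y, Measurable (U n x y))
    {q : ℝ} (hq : 0 < q) (n : ℕ) {A : Set Ω} (hA : MeasurableSet A) :
    ∫⁻ ω in A, ENNReal.ofReal (What d f U hfin q n ω) ∂μ
      = (∑ S ∈ pathsF d f hfin n, μ (openEv d f U q S ∩ A)) * (ENNReal.ofReal q ^ n)⁻¹ := by
  have hdiv : ∀ x : ℝ, ENNReal.ofReal (x / q ^ n)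
      = ENNReal.ofReal x * (ENNReal.ofReal q ^ n)⁻¹ := by
    intro x
    rw [ENNReal.ofReal_div_of_pos (pow_pos hq n), div_eq_mul_inv, ENNReal.ofReal_pow hq.le]
  have hstep1 : ∫⁻ ω in A, ENNReal.ofReal (What d f U hfin q n ω) ∂μ
      = (∫⁻ ω in A, ENNReal.ofReal
          (∑ S ∈ pathsF d f hfin n, ∏ i : Fin n, ind d f U q S i ω) ∂μ)
        * (ENNReal.ofReal q ^ n)⁻¹ := by
    rw [← lintegral_mul_const' _ _ (ENNReal.inv_ne_top.2
      (pow_ne_zero _ (ENNReal.ofReal_pos.2 hq).ne'))]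
    apply lintegral_congr
    intro ω
    rw [What, hdiv]
  rw [hstep1]
  congr 1
  have hmeas : ∀ S ∈ pathsF d f hfin n, Measurable
      (fun ω => ENNReal.ofReal (∏ i : Fin n, ind d f U q S i ω)) := by
    intro S _
    exact (Finset.measurable_prod _ (fun i _ =>
      measurable_ind d f U hUmeas q S i)).ennreal_ofReal
  have hsum : ∀ ω, ENNReal.ofReal
      (∑ S ∈ pathsF d f hfin n, ∏ i : Fin n, ind d f U q S i ω)
      = ∑ S ∈ pathsF d f hfin n, ENNReal.ofReal (∏ i : Fin n, ind d f U q S i ω) := by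
    intro ω
    apply ENNReal.ofReal_sum_of_nonneg
    intro S _
    apply Finset.prod_nonneg
    intro i _
    unfold ind
    split_ifs <;> norm_num
  rw [lintegral_congr hsum, lintegral_finset_sum _ hmeas]
  apply Finset.sum_congr rfl
  intro S _
  have hindic : (fun ω => ENNReal.ofReal (∏ i : Fin n, ind d f U q S i ω))
      = (openEv d f U q S).indicator (fun _ => (1 : ℝ≥0∞)) := by
    funext ω
    have hprod : (∏ i : Fin n, ind d f U q S i ω)
        = if (∀ i : Fin n,
            evU d U (pathEdge d S i) ω ≤ f (eΔ d (pathEdge d S i)) * q) then (1:ℝ) else 0 := by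
      unfold ind
      rw [Finset.prod_boole]
      simp
    by_cases hω : ω ∈ openEv d f U q S
    · rw [Set.indicator_of_mem hω, hprod, if_pos ((mem_openEv d f U).1 hω),
        ENNReal.ofReal_one]
    · rw [Set.indicator_of_notMem hω, hprod,
        if_neg (fun h => hω ((mem_openEv d f U).2 h)), ENNReal.ofReal_zero]
  rw [hindic, lintegral_indicator (measurableSet_openEv d f U hUmeas q S),
    Measure.restrict_restrict (measurableSet_openEv d f U hUmeas q S), lintegral_one,
    Measure.restrict_apply_univ]

/-- Key identity A: changing the parameter at the cylinder depth leaves atom integrals fixed. -/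
lemma keyA (hUmeas : ∀ n x y, Measurable (U n x y))
    (hUindep : iIndepFun
      (fun e : ℕ × Zd d × Zd d => U e.1 e.2.1 e.2.2) μ)
    (hUunif : ∀ n x y, μ.map (U n x y) = (volume : Measure ℝ).restrict (Set.Icc 0 1))
    (hf0 : ∀ z, 0 ≤ f z)
    {p' p : ℝ} (hp' : 0 < p') (hp'p : p' ≤ p) (hp1 : ∀ z, p * f z ≤ 1)
    (N : ℕ) (κ : EdgeT d → Bool) :
    ∫⁻ ω in atom d f U hfin p N κ, ENNReal.ofReal (What d f U hfin p' N ω) ∂μ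
      = ∫⁻ ω in atom d f U hfin p N κ, ENNReal.ofReal (What d f U hfin p N ω) ∂μ := by
  have hp : 0 < p := lt_of_lt_of_le hp' hp'p
  have hAmeas := measurableSet_atom d f U hfin hUmeas p N κ
  rw [lint_What d f U hfin hUmeas hp' N hAmeas, lint_What d f U hfin hUmeas hp N hAmeas,
    Finset.sum_mul, Finset.sum_mul]
  apply Finset.sum_congr rfl
  intro S hS
  have heval : ∀ q : ℝ, 0 < q → q ≤ p →
      μ (openEv d f U q S ∩ atom d f U hfin p N κ)
        = (∏ e ∈ edgeSet d f hfin N \ pathEdges d S, μ (evU d U e ⁻¹' atomB d f p κ e)) *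
          ∏ i : Fin N,
            (if κ (pathEdge d S i) then ENNReal.ofReal (f (eΔ d (pathEdge d S i)) * q) else 0) := by
    intro q hq hqp
    rw [Set.inter_comm, eval d f U hfin hUmeas hUindep hUunif hf0 hq hqp hp1 le_rfl κ hS]
    congr 1
    apply Finset.prod_congr rfl
    intro i _
    rw [if_pos i.isLt]
  rw [heval p' hp' hp'p, heval p hp le_rfl]
  by_cases hall : ∀ i : Fin N, κ (pathEdge d S i) = true
  · have hprod : ∀ q : ℝ, 0 ≤ q → (∏ i : Fin N,
        (if κ (pathEdge d S i) then ENNReal.ofReal (f (eΔ d (pathEdge d S i)) * q) else 0))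
        = (∏ i : Fin N, ENNReal.ofReal (f (eΔ d (pathEdge d S i))))
          * ENNReal.ofReal q ^ N := by
      intro q hq0
      rw [← Fin.prod_const N (ENNReal.ofReal q), ← Finset.prod_mul_distrib]
      · apply Finset.prod_congr rfl
        intro i _
        rw [if_pos (hall i), ENNReal.ofReal_mul (hf0 _)]
      done
    have hcancel : ∀ q : ℝ, 0 < q → ∀ R X : ℝ≥0∞,
        R * (X * ENNReal.ofReal q ^ N) * (ENNReal.ofReal q ^ N)⁻¹ = R * X := by
      intro q hq R X
      have h1 : ENNReal.ofReal q ^ N ≠ 0 := pow_ne_zero _ (ENNReal.ofReal_pos.2 hq).ne'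
      have h2 : ENNReal.ofReal q ^ N ≠ ⊤ := ENNReal.pow_ne_top ENNReal.ofReal_ne_top
      calc R * (X * ENNReal.ofReal q ^ N) * (ENNReal.ofReal q ^ N)⁻¹
          = R * X * (ENNReal.ofReal q ^ N * (ENNReal.ofReal q ^ N)⁻¹) := by ring
        _ = R * X := by rw [ENNReal.mul_inv_cancel h1 h2, mul_one]
    rw [hprod p' hp'.le, hprod p hp.le, hcancel p' hp', hcancel p hp]
  · push_neg at hall
    obtain ⟨i, hi⟩ := hall
    have hzero : ∀ q : ℝ, (∏ j : Fin N,
        (if κ (pathEdge d S j) then ENNReal.ofReal (f (eΔ d (pathEdge d S j)) * q) else 0)) = 0 := by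
      intro q
      apply Finset.prod_eq_zero (Finset.mem_univ i)
      rw [if_neg (by simp [hi])]
    rw [hzero, hzero]
    simp


section Extension

variable {M : ℕ}

/-- Restriction of a path of length `M+1` to its first `M+1` vertices. -/
def truncP (S' : Fin (M + 2) → Zd d) : Fin (M + 1) → Zd d := fun j => S' j.castSucc

/-- Extension of a path of length `M` by a step `z`. -/
def extP (S : Fin (M + 1) → Zd d) (z : Zd d) : Fin (M + 2) → Zd d :=
  Fin.snoc S (S (Fin.last M) + z)

lemma extP_castSucc (S : Fin (M + 1) → Zd d) (z : Zd d) (j : Fin (M + 1)) :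
    extP d S z j.castSucc = S j := by
  unfold extP
  exact Fin.snoc_castSucc _ _ _

lemma extP_last (S : Fin (M + 1) → Zd d) (z : Zd d) :
    extP d S z (Fin.last (M + 1)) = S (Fin.last M) + z := by
  unfold extP
  exact Fin.snoc_last _ _

lemma extP_mem {S : Fin (M + 1) → Zd d} {z : Zd d} (hS : S ∈ pathsF d f hfin M)
    (hz : f z ≠ 0) : extP d S z ∈ pathsF d f hfin (M + 1) := by
  rw [mem_pathsF] at hS ⊢
  constructor
  · have h0 : (0 : Fin (M + 2)) = (0 : Fin (M + 1)).castSucc := by simp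
    rw [h0, extP_castSucc]
    exact hS.1
  · intro i
    induction i using Fin.lastCases with
    | last =>
        rw [Fin.succ_last, extP_last, extP_castSucc, add_sub_cancel_left]
        exact hz
    | cast j =>
        rw [Fin.succ_castSucc, extP_castSucc, extP_castSucc]
        exact hS.2 j

lemma truncP_mem {S' : Fin (M + 2) → Zd d} (hS' : S' ∈ pathsF d f hfin (M + 1)) :
    truncP d S' ∈ pathsF d f hfin M := by
  rw [mem_pathsF] at hS' ⊢
  constructor
  · unfold truncP
    rw [Fin.castSucc_zero]
    exact hS'.1
  · intro j
    unfold truncP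
    rw [← Fin.succ_castSucc]
    exact hS'.2 j.castSucc

lemma lastStep_ne {S' : Fin (M + 2) → Zd d} (hS' : S' ∈ pathsF d f hfin (M + 1)) :
    f (S' (Fin.last (M + 1)) - S' (Fin.last M).castSucc) ≠ 0 := by
  rw [mem_pathsF] at hS'
  have := hS'.2 (Fin.last M)
  rwa [Fin.succ_last] at this

lemma truncP_extP (S : Fin (M + 1) → Zd d) (z : Zd d) : truncP d (extP d S z) = S := by
  funext j
  unfold truncP
  rw [extP_castSucc]

lemma extP_lastStep (S : Fin (M + 1) → Zd d) (z : Zd d) :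
    extP d S z (Fin.last (M + 1)) - extP d S z (Fin.last M).castSucc = z := by
  rw [extP_last, extP_castSucc, add_sub_cancel_left]

lemma extP_truncP (S' : Fin (M + 2) → Zd d) :
    extP d (truncP d S') (S' (Fin.last (M + 1)) - S' (Fin.last M).castSucc) = S' := by
  funext k
  induction k using Fin.lastCases with
  | last =>
      rw [extP_last]
      unfold truncP
      rw [add_comm, sub_add_cancel]
  | cast j =>
      rw [extP_castSucc]
      rfl

lemma pathEdge_extP_castSucc (S : Fin (M + 1) → Zd d) (z : Zd d) (j : Fin M) :
    pathEdge d (extP d S z) j.castSucc = pathEdge d S j := by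
  unfold pathEdge
  refine congrArg₂ Prod.mk (by simp) (congrArg₂ Prod.mk ?_ ?_)
  · rw [extP_castSucc]
  · rw [Fin.succ_castSucc, extP_castSucc]

lemma pathEdge_extP_last (S : Fin (M + 1) → Zd d) (z : Zd d) :
    pathEdge d (extP d S z) (Fin.last M) = (M, S (Fin.last M), S (Fin.last M) + z) := by
  unfold pathEdge
  refine congrArg₂ Prod.mk (by simp) (congrArg₂ Prod.mk ?_ ?_)
  · rw [extP_castSucc]
  · rw [Fin.succ_last, extP_last]

lemma pathEdges_extP (S : Fin (M + 1) → Zd d) (z : Zd d) :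
    pathEdges d (extP d S z) = insert (M, S (Fin.last M), S (Fin.last M) + z) (pathEdges d S) := by
  classical
  ext e
  simp only [pathEdges, Finset.mem_image, Finset.mem_insert, Finset.mem_univ, true_and]
  constructor
  · rintro ⟨i, rfl⟩
    induction i using Fin.lastCases with
    | last => left; rw [pathEdge_extP_last]
    | cast j => right; exact ⟨j, (pathEdge_extP_castSucc d S z j).symm⟩
  · rintro (rfl | ⟨j, rfl⟩)
    · exact ⟨Fin.last M, pathEdge_extP_last d S z⟩
    · exact ⟨j.castSucc, pathEdge_extP_castSucc d S z j⟩

end Extension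

/-- Key identity B: one-step extension identity for atom integrals. -/
lemma keyB (hUmeas : ∀ n x y, Measurable (U n x y))
    (hUindep : iIndepFun
      (fun e : ℕ × Zd d × Zd d => U e.1 e.2.1 e.2.2) μ)
    (hUunif : ∀ n x y, μ.map (U n x y) = (volume : Measure ℝ).restrict (Set.Icc 0 1))
    (hf0 : ∀ z, 0 ≤ f z) (hsum : ∑ᶠ z, f z = 1)
    {p q : ℝ} (hq : 0 < q) (hqp : q ≤ p) (hp1 : ∀ z, p * f z ≤ 1)
    {N M : ℕ} (hNM : N ≤ M) (κ : EdgeT d → Bool) :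
    ∫⁻ ω in atom d f U hfin p N κ, ENNReal.ofReal (What d f U hfin q (M + 1) ω) ∂μ
      = ∫⁻ ω in atom d f U hfin p N κ, ENNReal.ofReal (What d f U hfin q M ω) ∂μ := by
  classical
  have hAmeas := measurableSet_atom d f U hfin hUmeas p N κ
  rw [lint_What d f U hfin hUmeas hq (M + 1) hAmeas, lint_What d f U hfin hUmeas hq M hAmeas]
  have hsumF : ∑ z ∈ hfin.toFinset, f z = 1 := by
    rw [← finsum_eq_finset_sum_of_support_subset f (by simp [Set.Finite.coe_toFinset])]
    exact hsum
  have hofsum : ∑ z ∈ hfin.toFinset, ENNReal.ofReal (f z * q) = ENNReal.ofReal q := by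
    rw [← ENNReal.ofReal_sum_of_nonneg (fun z _ => mul_nonneg (hf0 z) hq.le),
      ← Finset.sum_mul, hsumF, one_mul]
  have hkey : ∑ S' ∈ pathsF d f hfin (M + 1), μ (openEv d f U q S' ∩ atom d f U hfin p N κ)
      = (∑ S ∈ pathsF d f hfin M, μ (openEv d f U q S ∩ atom d f U hfin p N κ))
        * ENNReal.ofReal q := by
    have hbij : ∑ S' ∈ pathsF d f hfin (M + 1), μ (openEv d f U q S' ∩ atom d f U hfin p N κ)
        = ∑ x ∈ pathsF d f hfin M ×ˢ hfin.toFinset,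
            μ (openEv d f U q (extP d x.1 x.2) ∩ atom d f U hfin p N κ) := by
      apply Finset.sum_nbij'
        (i := fun S' => (truncP d S', S' (Fin.last (M + 1)) - S' (Fin.last M).castSucc))
        (j := fun x => extP d x.1 x.2)
      · intro S' hS'
        rw [Finset.mem_product]
        exact ⟨truncP_mem d f hfin hS',
          (Set.Finite.mem_toFinset hfin).2 (lastStep_ne d f hfin hS')⟩
      · intro x hx
        rw [Finset.mem_product] at hx
        exact extP_mem d f hfin hx.1 ((Set.Finite.mem_toFinset hfin).1 hx.2)
      · intro S' _
        exact extP_truncP d S'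
      · intro x _
        refine Prod.ext ?_ ?_
        · exact truncP_extP d x.1 x.2
        · exact extP_lastStep d x.1 x.2
      · intro S' _
        rw [extP_truncP d S']
    rw [hbij, Finset.sum_product, Finset.sum_mul]
    apply Finset.sum_congr rfl
    intro S hS
    rw [← hofsum, Finset.mul_sum]
    apply Finset.sum_congr rfl
    intro z hz
    have hz' : f z ≠ 0 := (Set.Finite.mem_toFinset hfin).1 hz
    have hextmem := extP_mem d f hfin hS hz'
    rw [Set.inter_comm, eval d f U hfin hUmeas hUindep hUunif hf0 hq hqp hp1
      (le_trans hNM (Nat.le_succ M)) κ hextmem,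
      Set.inter_comm, eval d f U hfin hUmeas hUindep hUunif hf0 hq hqp hp1 hNM κ hS]
    have hrest : edgeSet d f hfin N \ pathEdges d (extP d S z)
        = edgeSet d f hfin N \ pathEdges d S := by
      ext e
      simp only [Finset.mem_sdiff, pathEdges_extP, Finset.mem_insert]
      constructor
      · rintro ⟨he, hne⟩
        exact ⟨he, fun h => hne (Or.inr h)⟩
      · rintro ⟨he, hne⟩
        refine ⟨he, ?_⟩
        rintro (rfl | h)
        · exact absurd (layer_lt_of_mem_edgeSet d f hfin he) (by simp; omega)
        · exact hne h
    have hprodsplit : (∏ i : Fin (M + 1),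
        (if (i : ℕ) < N then
          (if κ (pathEdge d (extP d S z) i) then
            ENNReal.ofReal (f (eΔ d (pathEdge d (extP d S z) i)) * q) else 0)
        else ENNReal.ofReal (f (eΔ d (pathEdge d (extP d S z) i)) * q)))
        = (∏ i : Fin M,
            (if (i : ℕ) < N then
              (if κ (pathEdge d S i) then ENNReal.ofReal (f (eΔ d (pathEdge d S i)) * q) else 0)
            else ENNReal.ofReal (f (eΔ d (pathEdge d S i)) * q))) * ENNReal.ofReal (f z * q) := by
      rw [Fin.prod_univ_castSucc]
      congr 1
      · apply Finset.prod_congr rfl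
        intro j _
        rw [pathEdge_extP_castSucc d S z j, Fin.coe_castSucc]
      · have hlast : ¬ ((Fin.last M : ℕ) < N) := by
          simp only [Fin.val_last]
          omega
        rw [if_neg hlast, pathEdge_extP_last d S z]
        simp [eΔ]
    rw [hrest, hprodsplit]
    ring
  rw [hkey]
  have h1 : ENNReal.ofReal q ≠ 0 := (ENNReal.ofReal_pos.2 hq).ne'
  have h2 : ENNReal.ofReal q ≠ ⊤ := ENNReal.ofReal_ne_top
  have h1M : ENNReal.ofReal q ^ M ≠ 0 := pow_ne_zero _ h1
  have h2M : ENNReal.ofReal q ^ M ≠ ⊤ := ENNReal.pow_ne_top h2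
  rw [pow_succ, ENNReal.mul_inv (Or.inl h1M) (Or.inl h2M)]
  calc (∑ S ∈ pathsF d f hfin M, μ (openEv d f U q S ∩ atom d f U hfin p N κ))
        * ENNReal.ofReal q * ((ENNReal.ofReal q ^ M)⁻¹ * (ENNReal.ofReal q)⁻¹)
      = (∑ S ∈ pathsF d f hfin M, μ (openEv d f U q S ∩ atom d f U hfin p N κ))
        * (ENNReal.ofReal q ^ M)⁻¹ * (ENNReal.ofReal q * (ENNReal.ofReal q)⁻¹) := by ring
    _ = _ := by rw [ENNReal.mul_inv_cancel h1 h2, mul_one]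


/-- The value of `What · p N` on the atom labelled `κ`. -/
def valA (p : ℝ) (N : ℕ) (κ : EdgeT d → Bool) : ℝ :=
  (∑ S ∈ pathsF d f hfin N, ∏ i : Fin N, (if κ (pathEdge d S i) then (1 : ℝ) else 0)) / p ^ N

lemma What_eq_valA {p : ℝ} {N : ℕ} {κ : EdgeT d → Bool} {ω : Ω}
    (hω : ω ∈ atom d f U hfin p N κ) :
    What d f U hfin p N ω = valA d f hfin p N κ := by
  unfold What valA
  congr 1
  apply Finset.sum_congr rfl
  intro S hS
  apply Finset.prod_congr rfl
  intro i _
  have he : pathEdge d S i ∈ edgeSet d f hfin N :=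
    pathEdge_mem_edgeSet d f hfin le_rfl hS i i.isLt
  have hB := (mem_atom d f U hfin).1 hω _ he
  cases hk : κ (pathEdge d S i) with
  | true =>
      simp only [atomB, hk, if_true, Set.mem_Iic] at hB
      simp only [ind, hk, if_true]
      rw [if_pos hB]
  | false =>
      simp only [atomB, hk, Bool.false_eq_true, if_false, Set.mem_compl_iff,
        Set.mem_Iic] at hB
      simp only [ind, hk, Bool.false_eq_true, if_false]
      rw [if_neg hB]

/-- Extension of a labelling of the edges of `edgeSet N` to all edges. -/
def extη (N : ℕ) (η : {e // e ∈ edgeSet d f hfin N} → Bool) : EdgeT d → Bool :=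
  fun e => if h : e ∈ edgeSet d f hfin N then η ⟨e, h⟩ else false

lemma atom_congr {p : ℝ} {N : ℕ} {κ κ' : EdgeT d → Bool}
    (h : ∀ e ∈ edgeSet d f hfin N, κ e = κ' e) :
    atom d f U hfin p N κ = atom d f U hfin p N κ' := by
  ext ω
  rw [mem_atom, mem_atom]
  constructor <;> intro H e he <;> have hB := H e he
  · rwa [show atomB d f p κ' e = atomB d f p κ e by unfold atomB; rw [h e he]]
  · rwa [show atomB d f p κ e = atomB d f p κ' e by unfold atomB; rw [h e he]]

lemma valA_congr {p : ℝ} {N : ℕ} {κ κ' : EdgeT d → Bool}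
    (h : ∀ e ∈ edgeSet d f hfin N, κ e = κ' e) :
    valA d f hfin p N κ = valA d f hfin p N κ' := by
  unfold valA
  congr 1
  apply Finset.sum_congr rfl
  intro S hS
  apply Finset.prod_congr rfl
  intro i _
  rw [h _ (pathEdge_mem_edgeSet d f hfin le_rfl hS i i.isLt)]

open Classical in
/-- The labellings giving atoms included in `{What p N < ε}`. -/
def badF (p ε : ℝ) (N : ℕ) : Finset ({e // e ∈ edgeSet d f hfin N} → Bool) :=
  Finset.univ.filter (fun η => valA d f hfin p N (extη d f hfin N η) < ε)

lemma AK_eq (p ε : ℝ) (N : ℕ) :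
    {ω : Ω | What d f U hfin p N ω < ε}
      = ⋃ η ∈ badF d f hfin p ε N, atom d f U hfin p N (extη d f hfin N η) := by
  classical
  ext ω
  simp only [Set.mem_setOf_eq, Set.mem_iUnion, exists_prop]
  constructor
  · intro hω
    set κω : EdgeT d → Bool := fun e => decide (evU d U e ω ≤ f (eΔ d e) * p) with hκω
    have hmem : ω ∈ atom d f U hfin p N κω := by
      rw [mem_atom]
      intro e he
      unfold atomB
      cases hd : κω e with
      | true =>
          rw [if_pos rfl]
          exact Set.mem_Iic.2 (of_decide_eq_true hd)
      | false =>
          rw [if_neg (by simp)]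
          exact of_decide_eq_false hd
    set η : {e // e ∈ edgeSet d f hfin N} → Bool := fun es => κω es.1 with hη
    have hagree : ∀ e ∈ edgeSet d f hfin N, extη d f hfin N η e = κω e := by
      intro e he
      unfold extη
      rw [dif_pos he]
    refine ⟨η, ?_, ?_⟩
    · apply Finset.mem_filter.2
      refine ⟨Finset.mem_univ _, ?_⟩
      rw [valA_congr d f hfin hagree, ← What_eq_valA d f U hfin hmem]
      exact hω
    · rw [atom_congr d f U hfin hagree]
      exact hmem
  · rintro ⟨η, hη, hω⟩
    rw [What_eq_valA d f U hfin hω]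
    exact (Finset.mem_filter.1 hη).2

lemma atoms_disjoint (p ε : ℝ) (N : ℕ) :
    Set.PairwiseDisjoint ↑(badF d f hfin p ε N)
      (fun η => atom d f U hfin p N (extη d f hfin N η)) := by
  intro η _ η' _ hne
  apply Set.disjoint_left.2
  intro ω hω hω'
  exfalso
  apply hne
  funext es
  obtain ⟨e, he⟩ := es
  have h1 := (mem_atom d f U hfin).1 hω e he
  have h2 := (mem_atom d f U hfin).1 hω' e he
  have hee : extη d f hfin N η e = extη d f hfin N η' e := by
    cases hb : extη d f hfin N η e with
    | true =>
        cases hb' : extη d f hfin N η' e with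
        | true => rfl
        | false =>
            rw [atomB, if_pos hb] at h1
            rw [atomB, if_neg (by simp [hb'])] at h2
            exact absurd h1 h2
    | false =>
        cases hb' : extη d f hfin N η' e with
        | true =>
            rw [atomB, if_neg (by simp [hb])] at h1
            rw [atomB, if_pos hb'] at h2
            exact absurd h2 h1
        | false => rfl
  unfold extη at hee
  rwa [dif_pos he, dif_pos he] at hee

/-- The main identity: on sublevel sets of `What p N`, the set-integral of the renormalized
partition function at a lower parameter `p'` at any later time `M` equals that of `What p N`. -/
lemma keyMain (hUmeas : ∀ n x y, Measurable (U n x y))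
    (hUindep : iIndepFun
      (fun e : ℕ × Zd d × Zd d => U e.1 e.2.1 e.2.2) μ)
    (hUunif : ∀ n x y, μ.map (U n x y) = (volume : Measure ℝ).restrict (Set.Icc 0 1))
    (hf0 : ∀ z, 0 ≤ f z) (hsum : ∑ᶠ z, f z = 1)
    {p' p : ℝ} (hp' : 0 < p') (hp'p : p' ≤ p) (hp1 : ∀ z, p * f z ≤ 1)
    {N M : ℕ} (hNM : N ≤ M) (ε : ℝ) :
    ∫⁻ ω in {ω : Ω | What d f U hfin p N ω < ε}, ENNReal.ofReal (What d f U hfin p' M ω) ∂μ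
      = ∫⁻ ω in {ω : Ω | What d f U hfin p N ω < ε},
          ENNReal.ofReal (What d f U hfin p N ω) ∂μ := by
  classical
  rw [AK_eq d f U hfin p ε N,
    lintegral_biUnion_finset (atoms_disjoint d f U hfin p ε N)
      (fun η _ => measurableSet_atom d f U hfin hUmeas p N _) _,
    lintegral_biUnion_finset (atoms_disjoint d f U hfin p ε N)
      (fun η _ => measurableSet_atom d f U hfin hUmeas p N _) _]
  apply Finset.sum_congr rfl
  intro η _
  have hchain : ∀ M', N ≤ M' →
      ∫⁻ ω in atom d f U hfin p N (extη d f hfin N η),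
        ENNReal.ofReal (What d f U hfin p' M' ω) ∂μ
      = ∫⁻ ω in atom d f U hfin p N (extη d f hfin N η),
          ENNReal.ofReal (What d f U hfin p' N ω) ∂μ := by
    intro M' hM'
    induction M', hM' using Nat.le_induction with
    | base => rfl
    | succ M' hM' ih =>
        rw [keyB d f U hfin hUmeas hUindep hUunif hf0 hsum hp' hp'p hp1 hM' _, ih]
  rw [hchain M hNM,
    keyA d f U hfin hUmeas hUindep hUunif hf0 hp' hp'p hp1 N _]


lemma W_eq_What {q : ℝ} (hq : 0 < q) {ω : Ω}
    (hgood : ∀ (n : ℕ) (x y : Zd d), 0 < U n x y ω) (n : ℕ) :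
    W d q n (coupledEnv d f U q ω) = What d f U hfin q n ω := by
  classical
  unfold W What
  congr 1
  have hset : {S : Fin (n + 1) → Zd d | S 0 = 0 ∧
      ∀ i : Fin n, coupledEnv d f U q ω i (S i.castSucc) (S i.succ) = true}
      = ↑((pathsF d f hfin n).filter
          (fun S => ∀ i : Fin n,
            U i (S i.castSucc) (S i.succ) ω ≤ f (S i.succ - S i.castSucc) * q)) := by
    ext S
    simp only [Set.mem_setOf_eq, Finset.coe_filter, Set.mem_setOf_eq, mem_pathsF,
      coupledEnv, decide_eq_true_eq]
    constructor
    · rintro ⟨h0, hop⟩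
      refine ⟨⟨h0, fun i => ?_⟩, hop⟩
      intro hzero
      have hle := hop i
      rw [hzero, zero_mul] at hle
      exact absurd hle (not_le.2 (hgood i _ _))
    · rintro ⟨⟨h0, _⟩, hop⟩
      exact ⟨h0, hop⟩
  have hcount : pathCount d n (coupledEnv d f U q ω) = ((pathsF d f hfin n).filter
      (fun S => ∀ i : Fin n,
        U i (S i.castSucc) (S i.succ) ω ≤ f (S i.succ - S i.castSucc) * q)).card := by
    rw [pathCount, ← Set.ncard_coe_finset, ← hset, ← Nat.card_coe_set_eq]
    rfl
  rw [hcount, Finset.card_filter]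
  push_cast
  apply Finset.sum_congr rfl
  intro S _
  have hrw : (∏ i : Fin n, ind d f U q S i ω)
      = ∏ i : Fin n, (if U i (S i.castSucc) (S i.succ) ω
          ≤ f (S i.succ - S i.castSucc) * q then (1 : ℝ) else 0) := by
    apply Finset.prod_congr rfl
    intro i _
    simp only [ind, evU, pathEdge, eΔ]
    exact if_congr Iff.rfl rfl rfl
  rw [hrw, Finset.prod_boole]
  simp

lemma good_ae (hUmeas : ∀ n x y, Measurable (U n x y))
    (hUunif : ∀ n x y, μ.map (U n x y) = (volume : Measure ℝ).restrict (Set.Icc 0 1)) :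
    ∀ᵐ ω ∂μ, ∀ (n : ℕ) (x y : Zd d), 0 < U n x y ω := by
  have hsub : {ω : Ω | ¬ ∀ (n : ℕ) (x y : Zd d), 0 < U n x y ω}
      ⊆ ⋃ e : EdgeT d, {ω | U e.1 e.2.1 e.2.2 ω ≤ 0} := by
    intro ω hω
    push_neg at hω
    obtain ⟨n, x, y, hle⟩ := hω
    exact Set.mem_iUnion.2 ⟨(n, x, y), hle⟩
  rw [ae_iff]
  apply measure_mono_null hsub
  apply measure_iUnion_null
  intro e
  have hrfl : {ω : Ω | U e.1 e.2.1 e.2.2 ω ≤ 0} = evU d U e ⁻¹' Set.Iic 0 := rfl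
  rw [hrfl, meas_Iic d U hUmeas hUunif e le_rfl zero_le_one, ENNReal.ofReal_zero]

end S6

/-- Under the monotone coupling, `p ↦ ℙ(W_∞(p) > 0)` is non-decreasing. -/
theorem stmt6 {Ω : Type} [MeasurableSpace Ω] (μ : Measure Ω) [IsProbabilityMeasure μ]
    (d : ℕ) (f : Zd d → ℝ) (hf0 : ∀ z, 0 ≤ f z)
    (hfin : (Function.support f).Finite) (hsum : ∑ᶠ z, f z = 1)
    (U : ℕ → Zd d → Zd d → Ω → ℝ)
    (hUmeas : ∀ n x y, Measurable (U n x y))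
    (hUindep : iIndepFun
      (fun e : ℕ × Zd d × Zd d => U e.1 e.2.1 e.2.2) μ)
    (hUunif : ∀ n x y, μ.map (U n x y) = (volume : Measure ℝ).restrict (Set.Icc 0 1))
    (Winf : ℝ → Ω → ℝ)
    (hWinf : ∀ q : ℝ, 0 < q → (∀ z, q * f z ≤ 1) →
      ∀ᵐ ω ∂μ, Tendsto (fun N => W d q N (coupledEnv d f U q ω)) atTop (nhds (Winf q ω))) :
    ∀ p' p : ℝ, 0 < p' → p' ≤ p → (∀ z, p * f z ≤ 1) →
      μ {ω | 0 < Winf p' ω} ≤ μ {ω | 0 < Winf p ω} := by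
  intro p' p hp' hp'p hp1
  classical
  have hp : 0 < p := lt_of_lt_of_le hp' hp'p
  have hp'1 : ∀ z, p' * f z ≤ 1 := fun z =>
    le_trans (mul_le_mul_of_nonneg_right hp'p (hf0 z)) (hp1 z)
  have hae1 := hWinf p' hp' hp'1
  have hae2 := hWinf p hp hp1
  have hae3 := S6.good_ae d U hUmeas hUunif
  have hT : ∀ᵐ ω ∂μ,
      Tendsto (fun n => S6.What d f U hfin p' n ω) atTop (nhds (Winf p' ω)) ∧
      Tendsto (fun n => S6.What d f U hfin p n ω) atTop (nhds (Winf p ω)) := by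
    filter_upwards [hae1, hae2, hae3] with ω h1 h2 h3
    have e1 : ∀ n : ℕ, S6.What d f U hfin p' n ω = W d p' n (coupledEnv d f U p' ω) :=
      fun n => (S6.W_eq_What d f U hfin hp' h3 n).symm
    have e2 : ∀ n : ℕ, S6.What d f U hfin p n ω = W d p n (coupledEnv d f U p ω) :=
      fun n => (S6.W_eq_What d f U hfin hp h3 n).symm
    constructor
    · simpa only [e1] using h1
    · simpa only [e2] using h2
  set T : Set Ω := {ω | Tendsto (fun n => S6.What d f U hfin p' n ω) atTop (nhds (Winf p' ω)) ∧
      Tendsto (fun n => S6.What d f U hfin p n ω) atTop (nhds (Winf p ω))} with hTdef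
  have hTnull : μ Tᶜ = 0 := by
    rw [hTdef, Set.compl_setOf]
    exact ae_iff.1 hT
  set h : Ω → ENNReal := fun ω =>
    liminf (fun M => ENNReal.ofReal (S6.What d f U hfin p' M ω)) atTop with hh
  have hmeas_h : Measurable h :=
    Measurable.liminf (fun M =>
      (S6.measurable_What d f U hfin hUmeas p' M).ennreal_ofReal)
  set A : ℝ → ℕ → Set Ω := fun ε n => {ω | S6.What d f U hfin p n ω < ε} with hA
  have hAmeas : ∀ ε n, MeasurableSet (A ε n) := fun ε n =>
    measurableSet_lt (S6.measurable_What d f U hfin hUmeas p n) measurable_const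
  set C : ℝ → ℕ → Set Ω := fun ε K => ⋂ n, ⋂ (_ : K ≤ n), A ε n with hC
  have hCmeas : ∀ ε K, MeasurableSet (C ε K) := fun ε K =>
    MeasurableSet.iInter (fun n => MeasurableSet.iInter (fun _ => hAmeas ε n))
  have hCmono : ∀ ε, Monotone (C ε) := by
    intro ε K K' hKK' ω hω
    exact Set.mem_iInter₂.2 fun n hn => Set.mem_iInter₂.1 hω n (hKK'.trans hn)
  set B : ℝ → Set Ω := fun ε => ⋃ K, C ε K with hB
  have hBmeas : ∀ ε, MeasurableSet (B ε) := fun ε =>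
    MeasurableSet.iUnion (fun K => hCmeas ε K)
  set D : Set Ω := ⋂ k : ℕ, B (1 / ((k : ℝ) + 1)) with hD
  have hDmeas : MeasurableSet D := MeasurableSet.iInter (fun k => hBmeas _)
  have hest : ∀ ε : ℝ, ∀ K : ℕ, ∫⁻ ω in C ε K, h ω ∂μ ≤ ENNReal.ofReal ε := by
    intro ε K
    have h1 : ∫⁻ ω in C ε K, h ω ∂μ ≤ ∫⁻ ω in A ε K, h ω ∂μ :=
      lintegral_mono_set (fun ω hω => Set.mem_iInter₂.1 hω K le_rfl)
    have h2 : ∫⁻ ω in A ε K, h ω ∂μ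
        ≤ liminf (fun M => ∫⁻ ω in A ε K,
            ENNReal.ofReal (S6.What d f U hfin p' M ω) ∂μ) atTop :=
      lintegral_liminf_le (fun M =>
        (S6.measurable_What d f U hfin hUmeas p' M).ennreal_ofReal)
    have h3 : liminf (fun M => ∫⁻ ω in A ε K,
          ENNReal.ofReal (S6.What d f U hfin p' M ω) ∂μ) atTop
        = ∫⁻ ω in A ε K, ENNReal.ofReal (S6.What d f U hfin p K ω) ∂μ := by
      have hev : ∀ᶠ M in atTop, (∫⁻ ω in A ε K,
            ENNReal.ofReal (S6.What d f U hfin p' M ω) ∂μ)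
          = ∫⁻ ω in A ε K, ENNReal.ofReal (S6.What d f U hfin p K ω) ∂μ := by
        rw [eventually_atTop]
        exact ⟨K, fun M hM =>
          S6.keyMain d f U hfin hUmeas hUindep hUunif hf0 hsum hp' hp'p hp1 hM ε⟩
      rw [liminf_congr hev, liminf_const]
    have h4 : ∫⁻ ω in A ε K, ENNReal.ofReal (S6.What d f U hfin p K ω) ∂μ
        ≤ ENNReal.ofReal ε * μ (A ε K) := by
      calc ∫⁻ ω in A ε K, ENNReal.ofReal (S6.What d f U hfin p K ω) ∂μ
          ≤ ∫⁻ _ω in A ε K, ENNReal.ofReal ε ∂μ :=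
            setLIntegral_mono measurable_const
              (fun ω hω => ENNReal.ofReal_le_ofReal (le_of_lt hω))
        _ = ENNReal.ofReal ε * μ (A ε K) := setLIntegral_const _ _
    have h5 : ENNReal.ofReal ε * μ (A ε K) ≤ ENNReal.ofReal ε := by
      calc ENNReal.ofReal ε * μ (A ε K) ≤ ENNReal.ofReal ε * 1 :=
            mul_le_mul_right prob_le_one _
        _ = ENNReal.ofReal ε := mul_one _
    exact le_trans h1 (le_trans h2 (le_trans (le_of_eq h3) (le_trans h4 h5)))
  have hestB : ∀ ε : ℝ, ∫⁻ ω in B ε, h ω ∂μ ≤ ENNReal.ofReal ε := by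
    intro ε
    have hind : ∀ ω, (B ε).indicator h ω = ⨆ K, (C ε K).indicator h ω := by
      intro ω
      by_cases hω : ω ∈ B ε
      · obtain ⟨K₀, hK₀⟩ := Set.mem_iUnion.1 hω
        rw [Set.indicator_of_mem hω]
        refine le_antisymm ?_ ?_
        · exact le_iSup_of_le K₀ (le_of_eq (Set.indicator_of_mem hK₀ h).symm)
        · exact iSup_le fun K => Set.indicator_apply_le (fun _ => le_rfl)
      · rw [Set.indicator_of_notMem hω]
        have hnot : ∀ K, ω ∉ C ε K := fun K hK => hω (Set.mem_iUnion.2 ⟨K, hK⟩)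
        simp [Set.indicator_of_notMem (hnot _)]
    rw [← lintegral_indicator (hBmeas ε), lintegral_congr hind,
      lintegral_iSup (fun K => hmeas_h.indicator (hCmeas ε K))
        (fun K K' hKK' => Set.indicator_le_indicator_of_subset (hCmono ε hKK')
          (fun _ => zero_le))]
    apply iSup_le
    intro K
    rw [lintegral_indicator (hCmeas ε K)]
    exact hest ε K
  have hD0 : ∫⁻ ω in D, h ω ∂μ = 0 := by
    have hle : ∀ k : ℕ, ∫⁻ ω in D, h ω ∂μ ≤ ENNReal.ofReal (1 / ((k : ℝ) + 1)) := by
      intro k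
      refine le_trans (lintegral_mono_set ?_) (hestB (1 / ((k : ℝ) + 1)))
      exact Set.iInter_subset _ k
    have htend : Tendsto (fun k : ℕ => ENNReal.ofReal (1 / ((k : ℝ) + 1))) atTop (nhds 0) := by
      rw [← ENNReal.ofReal_zero]
      exact ENNReal.tendsto_ofReal tendsto_one_div_add_atTop_nhds_zero_nat
    exact le_antisymm (ge_of_tendsto htend (Eventually.of_forall hle)) zero_le
  have hDnull : μ (D ∩ {ω | h ω ≠ 0}) = 0 := by
    have hae := (lintegral_eq_zero_iff hmeas_h).1 hD0
    have h0 : μ.restrict D {ω | h ω ≠ 0} = 0 := by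
      have := ae_iff.1 hae
      simpa using this
    rw [Measure.restrict_apply' hDmeas] at h0
    rw [Set.inter_comm]
    exact h0
  have hsub : {ω | 0 < Winf p' ω} ∩ {ω | ¬ 0 < Winf p ω}
      ⊆ Tᶜ ∪ (D ∩ {ω | h ω ≠ 0}) := by
    rintro ω ⟨hω1, hω2⟩
    by_cases hωT : ω ∈ T
    · right
      obtain ⟨ht1, ht2⟩ := hωT
      constructor
      · apply Set.mem_iInter.2
        intro k
        have hlt : Winf p ω < 1 / ((k : ℝ) + 1) :=
          lt_of_le_of_lt (not_lt.1 hω2) (by positivity)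
        have hev := ht2.eventually_lt_const hlt
        rw [eventually_atTop] at hev
        obtain ⟨K, hK⟩ := hev
        exact Set.mem_iUnion.2 ⟨K, Set.mem_iInter.2 fun n => Set.mem_iInter.2 fun hn => hK n hn⟩
      · have htnd : Tendsto (fun M => ENNReal.ofReal (S6.What d f U hfin p' M ω)) atTop
            (nhds (ENNReal.ofReal (Winf p' ω))) := ENNReal.tendsto_ofReal ht1
        have : h ω = ENNReal.ofReal (Winf p' ω) := htnd.liminf_eq
        simp only [Set.mem_setOf_eq, this]
        exact (ENNReal.ofReal_pos.2 hω1).ne'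
    · left; exact hωT
  have hmain : μ ({ω | 0 < Winf p' ω} ∩ {ω | ¬ 0 < Winf p ω}) = 0 := by
    apply measure_mono_null hsub
    apply le_antisymm _ zero_le
    calc μ (Tᶜ ∪ (D ∩ {ω | h ω ≠ 0})) ≤ μ Tᶜ + μ (D ∩ {ω | h ω ≠ 0}) :=
          measure_union_le _ _
      _ = 0 := by rw [hTnull, hDnull, add_zero]
  calc μ {ω | 0 < Winf p' ω}
      ≤ μ (({ω | 0 < Winf p' ω} ∩ {ω | ¬ 0 < Winf p ω}) ∪ {ω | 0 < Winf p ω}) := by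
        apply measure_mono
        intro ω hω
        by_cases h2 : 0 < Winf p ω
        · exact Or.inr h2
        · exact Or.inl ⟨hω, h2⟩
    _ ≤ μ ({ω | 0 < Winf p' ω} ∩ {ω | ¬ 0 < Winf p ω}) + μ {ω | 0 < Winf p ω} :=
          measure_union_le _ _
    _ = μ {ω | 0 < Winf p ω} := by rw [hmain, zero_add]
end
end
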